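/- arXiv:2501.01261 — 9 statements merged into one kernel-verified Lean document; each statement's English description precedes it below -/
import Mathlib

section
/- Let X be a topological space, Y a compact countable topological space, and f : X × Y → ℝ̄ a separately continuous function. Then the pair of extremal sections (∧_f, ∨_f) is a stable pair of Hahn on X. -/
/-- A pair `(g, h)` of extended-real-valued functions on `X` is a *stable pair of Hahn*
if there is a sequence of continuous functions `u n` such that for every `x`,
`g x = min_n (u n x)` and `h x = max_n (u n x)` (the infimum and supremum are attained). -/
def StablePairOfHahn {X : Type*} [TopologicalSpace X] (g h : X → EReal) : Prop :=
  ∃ u : ℕ → X → EReal, (∀ n, Continuous (u n)) ∧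
    ∀ x, IsLeast (Set.range fun n => u n x) (g x) ∧
      IsGreatest (Set.range fun n => u n x) (h x)

theorem stmt0 {X Y : Type*} [TopologicalSpace X] [TopologicalSpace Y]
    [CompactSpace Y] [Countable Y] [Nonempty Y]
    (f : X × Y → EReal)
    (hf1 : ∀ x : X, Continuous fun y : Y => f (x, y))
    (hf2 : ∀ y : Y, Continuous fun x : X => f (x, y)) :
    StablePairOfHahn (fun x => ⨅ y : Y, f (x, y)) (fun x => ⨆ y : Y, f (x, y)) := by
  obtain ⟨e, he⟩ := exists_surjective_nat Y
  refine ⟨fun n x => f (x, e n), fun n => hf2 (e n), fun x => ?_⟩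
  have hrange : (Set.range fun n => f (x, e n)) = Set.range fun y : Y => f (x, y) := by
    exact he.range_comp fun y => f (x, y)
  have hcpt : IsCompact (Set.range fun y : Y => f (x, y)) :=
    isCompact_range (hf1 x)
  have hne : (Set.range fun y : Y => f (x, y)).Nonempty := Set.range_nonempty _
  obtain ⟨a, ha⟩ := hcpt.exists_isLeast hne
  obtain ⟨b, hb⟩ := hcpt.exists_isGreatest hne
  have h1 : (⨅ y : Y, f (x, y)) = a := by
    rw [iInf, ha.csInf_eq]
  have h2 : (⨆ y : Y, f (x, y)) = b := by
    rw [iSup, hb.csSup_eq]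
  simp only [hrange, h1, h2]
  exact ⟨ha, hb⟩
end

section
/- Let X be a topological space, Y a functionally closed subspace of X, (g,h) a countable pair of Hahn on X, and f₀ : X → ℝ̄ a continuous function such that g(y) ≤ f₀(y) ≤ h(y) for every y ∈ Y. Then there exists a continuous function f : X → ℝ̄ such that f(y) = f₀(y) for every y ∈ Y and g(x) ≤ f(x) ≤ h(x) for every x ∈ X. -/
/-- A set `A ⊆ X` is *functionally closed* if it is the zero set of a continuous
function `α : X → [0,1]`. -/
def FunctionallyClosed {X : Type*} [TopologicalSpace X] (A : Set X) : Prop :=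
  ∃ α : X → ℝ, Continuous α ∧ (∀ x, α x ∈ Set.Icc (0 : ℝ) 1) ∧ A = α ⁻¹' {0}

/-- A pair `(g, h)` is a *countable pair of Hahn* if there are sequences of continuous
functions `gs n`, `hs n` with `g x = ⨅ n, gs n x ≤ ⨆ n, hs n x = h x` for every `x`. -/
def CountablePairOfHahn {X : Type*} [TopologicalSpace X] (g h : X → EReal) : Prop :=
  ∃ gs hs : ℕ → X → EReal, (∀ n, Continuous (gs n)) ∧ (∀ n, Continuous (hs n)) ∧
    ∀ x, g x = ⨅ n, gs n x ∧ h x = ⨆ n, hs n x ∧ g x ≤ h x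

section Aux

open Set Filter Topology

variable {X : Type*} [TopologicalSpace X]

/-- Separation of two "countable zero sets" by a continuous function. -/
lemma sep_zero (u v : ℕ → X → ℝ) (hu : ∀ n, Continuous (u n)) (hv : ∀ n, Continuous (v n))
    (hdisj : ∀ x, ¬((∀ n, u n x ≤ 0) ∧ (∀ n, v n x ≤ 0))) :
    ∃ k : X → ℝ, Continuous k ∧ (∀ x, k x ∈ Set.Icc (0:ℝ) 1) ∧
      (∀ x, (∀ n, u n x ≤ 0) → k x = 1) ∧ (∀ x, (∀ n, v n x ≤ 0) → k x = 0) := by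
  have geom : Summable (fun n : ℕ => (2⁻¹ : ℝ) ^ n) :=
    summable_geometric_of_lt_one (by norm_num) (by norm_num)
  have key : ∀ w : ℕ → X → ℝ, (∀ n, Continuous (w n)) →
      ∃ Φ : X → ℝ, Continuous Φ ∧ (∀ x, 0 ≤ Φ x) ∧
        (∀ x, (∀ n, w n x ≤ 0) → Φ x = 0) ∧ (∀ x, (¬ ∀ n, w n x ≤ 0) → 0 < Φ x) := by
    intro w hw
    set t : ℕ → X → ℝ := fun n x => (2⁻¹ : ℝ) ^ n * min (max (w n x) 0) 1 with ht
    have htc : ∀ n, Continuous (t n) := fun n =>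
      continuous_const.mul (((hw n).max continuous_const).min continuous_const)
    have ht0 : ∀ n x, 0 ≤ t n x := by
      intro n x
      apply mul_nonneg (by positivity)
      exact le_min (le_max_right _ _) zero_le_one
    have htb : ∀ n x, ‖t n x‖ ≤ (2⁻¹ : ℝ) ^ n := by
      intro n x
      rw [Real.norm_eq_abs, abs_of_nonneg (ht0 n x)]
      have h1 : min (max (w n x) 0) 1 ≤ 1 := min_le_right _ _
      calc (2⁻¹ : ℝ) ^ n * min (max (w n x) 0) 1 ≤ (2⁻¹ : ℝ) ^ n * 1 := by
            apply mul_le_mul_of_nonneg_left h1 (by positivity)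
        _ = (2⁻¹ : ℝ) ^ n := mul_one _
    have hsum : ∀ x, Summable fun n => t n x := by
      intro x
      refine Summable.of_nonneg_of_le (fun n => ht0 n x) (fun n => ?_) geom
      have := htb n x; rwa [Real.norm_eq_abs, abs_of_nonneg (ht0 n x)] at this
    refine ⟨fun x => ∑' n, t n x, continuous_tsum htc geom htb, ?_, ?_, ?_⟩
    · intro x; exact tsum_nonneg (fun n => ht0 n x)
    · intro x hx
      have : ∀ n, t n x = 0 := by
        intro n
        have : max (w n x) 0 = 0 := max_eq_right (hx n)
        simp [ht, this]
      simp [this]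
    · intro x hx
      push_neg at hx
      obtain ⟨n, hn⟩ := hx
      refine Summable.tsum_pos (hsum x) (fun m => ht0 m x) n ?_
      apply mul_pos (by positivity)
      exact lt_min (lt_max_of_lt_left hn) one_pos
  obtain ⟨Φ, hΦc, hΦ0, hΦz, hΦp⟩ := key u hu
  obtain ⟨Ψ, hΨc, hΨ0, hΨz, hΨp⟩ := key v hv
  have hden : ∀ x, 0 < Φ x + Ψ x := by
    intro x
    rcases Classical.em (∀ n, u n x ≤ 0) with h | h
    · have : ¬ ∀ n, v n x ≤ 0 := fun h' => hdisj x ⟨h, h'⟩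
      have := hΨp x this
      linarith [hΦ0 x]
    · have := hΦp x h
      linarith [hΨ0 x]
  refine ⟨fun x => Ψ x / (Φ x + Ψ x), hΨc.div (hΦc.add hΨc) (fun x => (hden x).ne'), ?_, ?_, ?_⟩
  · intro x
    show 0 ≤ Ψ x / (Φ x + Ψ x) ∧ _
    constructor
    · exact div_nonneg (hΨ0 x) (hden x).le
    · rw [div_le_one (hden x)]; linarith [hΦ0 x]
  · intro x hx
    show Ψ x / (Φ x + Ψ x) = 1
    rw [hΦz x hx, zero_add, div_self]
    have : ¬ ∀ n, v n x ≤ 0 := fun h' => hdisj x ⟨hx, h'⟩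
    exact (hΨp x this).ne'
  · intro x hx
    show Ψ x / (Φ x + Ψ x) = 0
    rw [hΨz x hx, zero_div]

lemma gap_insert (Gs Hs : ℕ → X → ℝ) (hG : ∀ n, Continuous (Gs n)) (hH : ∀ n, Continuous (Hs n))
    (C : ℝ) (hC : 0 < C) (hbd : ∀ n x, |Gs n x| ≤ C ∧ |Hs n x| ≤ C)
    (ε : ℝ) (hε : 0 < ε)
    (hgap : ∀ x, (⨅ n, Gs n x) + ε ≤ ⨆ n, Hs n x) :
    ∃ δ : X → ℝ, Continuous δ ∧ ∀ x, (⨅ n, Gs n x) ≤ δ x ∧ δ x ≤ ⨆ n, Hs n x := by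
  have hbdb : ∀ x, BddBelow (Set.range fun n => Gs n x) := by
    intro x; refine ⟨-C, ?_⟩; rintro _ ⟨n, rfl⟩
    linarith [abs_le.mp (hbd n x).1]
  have hbda : ∀ x, BddAbove (Set.range fun n => Hs n x) := by
    intro x; refine ⟨C, ?_⟩; rintro _ ⟨n, rfl⟩
    linarith [abs_le.mp (hbd n x).2]
  set L : X → ℝ := fun x => ⨅ n, Gs n x with hL
  set U : X → ℝ := fun x => ⨆ n, Hs n x with hU
  have hLle : ∀ x n, L x ≤ Gs n x := fun x n => ciInf_le (hbdb x) n
  have hUge : ∀ x n, Hs n x ≤ U x := fun x n => le_ciSup (hbda x) n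
  have hLC : ∀ x, -C ≤ L x ∧ L x ≤ C := by
    intro x
    constructor
    · exact le_ciInf fun n => by linarith [abs_le.mp (hbd n x).1]
    · exact (hLle x 0).trans (by linarith [abs_le.mp (hbd 0 x).1])
  have hUC : ∀ x, -C ≤ U x ∧ U x ≤ C := by
    intro x
    constructor
    · exact (by linarith [abs_le.mp (hbd 0 x).2] : -C ≤ Hs 0 x).trans (hUge x 0)
    · exact ciSup_le fun n => by linarith [abs_le.mp (hbd n x).2]
  set N : ℕ := ⌈4 * C / ε⌉₊ + 1 with hN
  set t : ℕ → ℝ := fun i => -C + i * (ε / 2) with htdef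
  clear_value L U N t
  -- separation functions
  have hk : ∀ i : ℕ, ∃ k : X → ℝ, Continuous k ∧ (∀ x, k x ∈ Set.Icc (0:ℝ) 1) ∧
      (∀ x, (∀ n, t i - Gs n x ≤ 0) → k x = 1) ∧ (∀ x, (∀ n, Hs n x - (t i + ε/2) ≤ 0) → k x = 0) := by
    intro i
    apply sep_zero (fun n x => t i - Gs n x) (fun n x => Hs n x - (t i + ε/2))
      (fun n => continuous_const.sub (hG n)) (fun n => (hH n).sub continuous_const)
    rintro x ⟨h1, h2⟩
    have hti : t i = -C + i * (ε / 2) := congrFun htdef i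
    have hL1 : t i ≤ ⨅ n, Gs n x := le_ciInf fun n => by linarith [h1 n]
    have hU1 : (⨆ n, Hs n x) ≤ t i + ε / 2 := ciSup_le fun n => by linarith [h2 n]
    have h3 := hgap x
    linarith
  choose k hkc hk01 hk1 hk0 using hk
  refine ⟨fun x => -C + (ε/2) * ∑ i ∈ Finset.range N, k i x,
    continuous_const.add (continuous_const.mul (continuous_finset_sum _ fun i _ => hkc i)), ?_⟩
  intro x
  have hLx : L x = ⨅ n, Gs n x := congrFun hL x
  have hUx : U x = ⨆ n, Hs n x := congrFun hU x
  constructor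
  · -- lower bound
    rw [← hLx]
    set j : ℕ := ⌊(L x + C) / (ε/2)⌋₊ with hj
    have hd2 : (0:ℝ) < ε/2 := by linarith
    have harg : 0 ≤ (L x + C) / (ε/2) := div_nonneg (by linarith [(hLC x).1]) hd2.le
    have hj1 : (j:ℝ) * (ε/2) ≤ L x + C := by
      have := Nat.floor_le harg
      calc (j:ℝ) * (ε/2) ≤ ((L x + C)/(ε/2)) * (ε/2) := by
            apply mul_le_mul_of_nonneg_right this hd2.le
        _ = L x + C := by field_simp
    have hj2 : L x + C < (j + 1 : ℝ) * (ε/2) := by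
      have := Nat.lt_floor_add_one ((L x + C) / (ε/2))
      calc L x + C = ((L x + C)/(ε/2)) * (ε/2) := by field_simp
        _ < (j + 1 : ℝ) * (ε/2) := by
            apply mul_lt_mul_of_pos_right (by exact_mod_cast this) hd2
    have hjN : j + 1 ≤ N := by
      have h4 : (L x + C) / (ε/2) ≤ 4 * C / ε := by
        rw [div_le_div_iff₀ hd2 (by linarith : (0:ℝ) < ε)]
        nlinarith [(hLC x).2]
      have h5 : (j:ℝ) ≤ (⌈4*C/ε⌉₊ : ℝ) :=
        le_trans (le_trans (Nat.floor_le harg) h4) (Nat.le_ceil _)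
      have h6 : j ≤ ⌈4*C/ε⌉₊ := Nat.cast_le.mp h5
      omega
    -- each k i with i ≤ j equals 1
    have hone : ∀ i, i ≤ j → k i x = 1 := by
      intro i hi
      apply hk1 i x
      intro n
      have : t i ≤ t j := by
        simp only [htdef]
        have : (i:ℝ) ≤ (j:ℝ) := Nat.cast_le.mpr hi
        nlinarith
      have htj : t j ≤ L x := by simp only [htdef]; linarith
      have := hLle x n
      linarith [this, htj, ‹t i ≤ t j›]
    have hsum1 : (j + 1 : ℝ) ≤ ∑ i ∈ Finset.range N, k i x := by
      have hsub : Finset.range (j+1) ⊆ Finset.range N := Finset.range_subset_range.mpr hjN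
      calc (j + 1 : ℝ) = ∑ i ∈ Finset.range (j+1), k i x := by
            rw [Finset.sum_congr rfl (fun i hi => hone i (Nat.lt_succ_iff.mp (Finset.mem_range.mp hi)))]
            simp
        _ ≤ ∑ i ∈ Finset.range N, k i x :=
            Finset.sum_le_sum_of_subset_of_nonneg hsub (fun i _ _ => (hk01 i x).1)
    have : -C + (ε/2) * (j+1 : ℝ) ≤ -C + (ε/2) * ∑ i ∈ Finset.range N, k i x := by
      have := mul_le_mul_of_nonneg_left hsum1 hd2.le
      linarith
    linarith [hj2, this]
  · -- upper bound
    rw [← hUx]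
    have hd2 : (0:ℝ) < ε/2 := by linarith
    set M : ℕ := ⌈(U x + C - ε/2) / (ε/2)⌉₊ with hM
    have hUpos : ε/2 ≤ U x + C - ε/2 := by
      have h3 : L x + ε ≤ U x := by rw [hLx, hUx]; exact hgap x
      linarith [(hLC x).1]
    have harg : 0 ≤ (U x + C - ε/2) / (ε/2) := div_nonneg (by linarith) hd2.le
    have hM1 : U x + C - ε/2 ≤ (M:ℝ) * (ε/2) := by
      have := Nat.le_ceil ((U x + C - ε/2) / (ε/2))
      calc U x + C - ε/2 = ((U x + C - ε/2)/(ε/2)) * (ε/2) := by field_simp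
        _ ≤ (M:ℝ) * (ε/2) := mul_le_mul_of_nonneg_right this hd2.le
    have hM2 : (M:ℝ) * (ε/2) < U x + C := by
      have hlt : (M:ℝ) < (U x + C - ε/2)/(ε/2) + 1 := by
        exact_mod_cast Nat.ceil_lt_add_one harg
      calc (M:ℝ) * (ε/2) < ((U x + C - ε/2)/(ε/2) + 1) * (ε/2) :=
            mul_lt_mul_of_pos_right hlt hd2
        _ = U x + C := by field_simp; ring
    have hzero : ∀ i, M ≤ i → k i x = 0 := by
      intro i hi
      apply hk0 i x
      intro n
      have h1 : (M:ℝ) ≤ (i:ℝ) := Nat.cast_le.mpr hi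
      have h2 : U x ≤ t i + ε/2 := by
        simp only [htdef]
        nlinarith
      linarith [hUge x n]
    have hsum2 : ∑ i ∈ Finset.range N, k i x ≤ (M:ℝ) := by
      calc ∑ i ∈ Finset.range N, k i x ≤ ∑ i ∈ Finset.range N, (if i < M then (1:ℝ) else 0) := by
            apply Finset.sum_le_sum
            intro i _
            by_cases hiM : i < M
            · simp only [hiM, if_true]; exact (hk01 i x).2
            · simp only [hiM, if_false]
              exact le_of_eq (hzero i (Nat.le_of_not_lt hiM))
        _ = ((Finset.range N).filter (· < M)).card := by rw [Finset.sum_boole]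
        _ ≤ (M:ℝ) := by
            have : (Finset.range N).filter (· < M) ⊆ Finset.range M := by
              intro i hi
              simp only [Finset.mem_filter, Finset.mem_range] at hi ⊢
              exact hi.2
            have := Finset.card_le_card this
            rw [Finset.card_range] at this
            exact_mod_cast this
    have : -C + (ε/2) * ∑ i ∈ Finset.range N, k i x ≤ -C + (ε/2) * (M:ℝ) := by
      have := mul_le_mul_of_nonneg_left hsum2 hd2.le
      linarith
    linarith [hM2, this]

/-- Insertion of a continuous function between a countable inf and a countable sup. -/
lemma insertion (Gs Hs : ℕ → X → ℝ) (hG : ∀ n, Continuous (Gs n)) (hH : ∀ n, Continuous (Hs n))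
    (C : ℝ) (hC : 0 < C) (hbd : ∀ n x, |Gs n x| ≤ C ∧ |Hs n x| ≤ C)
    (hle : ∀ x, (⨅ n, Gs n x) ≤ ⨆ n, Hs n x) :
    ∃ f : X → ℝ, Continuous f ∧ ∀ x, (⨅ n, Gs n x) ≤ f x ∧ f x ≤ ⨆ n, Hs n x := by
  have hbdb : ∀ x, BddBelow (Set.range fun n => Gs n x) := by
    intro x; refine ⟨-C, ?_⟩; rintro _ ⟨n, rfl⟩
    linarith [abs_le.mp (hbd n x).1]
  have hbda : ∀ x, BddAbove (Set.range fun n => Hs n x) := by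
    intro x; refine ⟨C, ?_⟩; rintro _ ⟨n, rfl⟩
    linarith [abs_le.mp (hbd n x).2]
  have hLle : ∀ x n, (⨅ m, Gs m x) ≤ Gs n x := fun x n => ciInf_le (hbdb x) n
  have hUge : ∀ x n, Hs n x ≤ ⨆ m, Hs m x := fun x n => le_ciSup (hbda x) n
  have hLC : ∀ x, -C ≤ (⨅ n, Gs n x) ∧ (⨅ n, Gs n x) ≤ C := by
    intro x
    exact ⟨le_ciInf fun n => by linarith [abs_le.mp (hbd n x).1],
      (hLle x 0).trans (by linarith [abs_le.mp (hbd 0 x).1])⟩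
  have hUC : ∀ x, -C ≤ (⨆ n, Hs n x) ∧ (⨆ n, Hs n x) ≤ C := by
    intro x
    exact ⟨le_trans (by linarith [abs_le.mp (hbd 0 x).2]) (hUge x 0),
      ciSup_le fun n => by linarith [abs_le.mp (hbd n x).2]⟩
  -- the one-step improvement
  have step : ∀ (ε : ℝ), 0 < ε → ∀ f : X → ℝ, Continuous f → (∀ x, |f x| ≤ C) →
      (∀ x, (⨅ n, Gs n x) - ε ≤ f x ∧ f x ≤ (⨆ n, Hs n x) + ε) →
      ∃ f' : X → ℝ, Continuous f' ∧ (∀ x, |f' x| ≤ C) ∧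
        (∀ x, |f' x - f x| ≤ ε/2) ∧
        (∀ x, (⨅ n, Gs n x) - ε/2 ≤ f' x ∧ f' x ≤ (⨆ n, Hs n x) + ε/2) := by
    intro ε hε f hf hfC hfb
    obtain ⟨δ, hδc, hδ⟩ := gap_insert (fun n x => Gs n x - f x - ε/2)
      (fun n x => Hs n x - f x + ε/2)
      (fun n => ((hG n).sub hf).sub continuous_const)
      (fun n => ((hH n).sub hf).add continuous_const)
      (2*C + ε) (by linarith)
      (by
        intro n x
        constructor
        · have := abs_le.mp (hbd n x).1
          have := abs_le.mp (hfC x)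
          rw [abs_le]; constructor <;> linarith
        · have := abs_le.mp (hbd n x).2
          have := abs_le.mp (hfC x)
          rw [abs_le]; constructor <;> linarith)
      ε hε
      (by
        intro x
        have e1 : (⨅ n, Gs n x - f x - ε/2) = (⨅ n, Gs n x) - f x - ε/2 := by
          have := Monotone.map_ciInf_of_continuousAt
            (f := fun t : ℝ => t - f x - ε/2) (g := fun n => Gs n x)
            (by fun_prop) (fun a b hab => by dsimp; linarith) (hbdb x)
          simpa using this.symm
        have e2 : (⨆ n, Hs n x - f x + ε/2) = (⨆ n, Hs n x) - f x + ε/2 := by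
          have := Monotone.map_ciSup_of_continuousAt
            (f := fun t : ℝ => t - f x + ε/2) (g := fun n => Hs n x)
            (by fun_prop) (fun a b hab => by dsimp; linarith) (hbda x)
          simpa using this.symm
        rw [e1, e2]
        linarith [hle x])
    -- clamp δ to [-ε/2, ε/2], then clamp f + δ to [-C, C]
    set δ' : X → ℝ := fun x => max (-(ε/2)) (min (ε/2) (δ x)) with hδ'
    set f' : X → ℝ := fun x => max (-C) (min C (f x + δ' x)) with hf'
    have e1 : ∀ x, (⨅ n, Gs n x - f x - ε/2) = (⨅ n, Gs n x) - f x - ε/2 := by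
      intro x
      have := Monotone.map_ciInf_of_continuousAt
        (f := fun t : ℝ => t - f x - ε/2) (g := fun n => Gs n x)
        (by fun_prop) (fun a b hab => by dsimp; linarith) (hbdb x)
      simpa using this.symm
    have e2 : ∀ x, (⨆ n, Hs n x - f x + ε/2) = (⨆ n, Hs n x) - f x + ε/2 := by
      intro x
      have := Monotone.map_ciSup_of_continuousAt
        (f := fun t : ℝ => t - f x + ε/2) (g := fun n => Hs n x)
        (by fun_prop) (fun a b hab => by dsimp; linarith) (hbda x)
      simpa using this.symm
    have hδl : ∀ x, (⨅ n, Gs n x) - f x - ε/2 ≤ δ x := by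
      intro x; have := (hδ x).1; rwa [e1 x] at this
    have hδu : ∀ x, δ x ≤ (⨆ n, Hs n x) - f x + ε/2 := by
      intro x; have := (hδ x).2; rwa [e2 x] at this
    have hδ'l : ∀ x, (⨅ n, Gs n x) - f x - ε/2 ≤ δ' x := by
      intro x
      have h1 : (⨅ n, Gs n x) - f x - ε/2 ≤ ε/2 := by linarith [(hfb x).1]
      exact le_max_of_le_right (le_min h1 (hδl x))
    have hδ'u : ∀ x, δ' x ≤ (⨆ n, Hs n x) - f x + ε/2 := by
      intro x
      have h1 : -(ε/2) ≤ (⨆ n, Hs n x) - f x + ε/2 := by linarith [(hfb x).2]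
      exact max_le h1 (le_trans (min_le_right _ _) (hδu x))
    have hδ'b : ∀ x, |δ' x| ≤ ε/2 := by
      intro x
      rw [abs_le]
      exact ⟨le_max_left _ _, max_le (by linarith) (min_le_left _ _)⟩
    refine ⟨f', ?_, ?_, ?_, ?_⟩
    · apply Continuous.max continuous_const
      apply Continuous.min continuous_const
      exact hf.add ((continuous_const.max (continuous_const.min hδc)))
    · intro x
      rw [abs_le]
      exact ⟨le_max_left _ _, max_le (by linarith) (min_le_left _ _)⟩
    · intro x
      have hfx := abs_le.mp (hfC x)
      have hdx := abs_le.mp (hδ'b x)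
      rw [abs_le]
      constructor
      · -- f x - ε/2 ≤ f' x  i.e.  -(ε/2) ≤ f' x - f x
        have : f x - ε/2 ≤ min C (f x + δ' x) := le_min (by linarith) (by linarith)
        have := le_trans this (le_max_right (-C) _)
        simp only [hf']
        linarith
      · have h1 : min C (f x + δ' x) ≤ f x + ε/2 := le_trans (min_le_right _ _) (by linarith)
        have h2 : max (-C) (min C (f x + δ' x)) ≤ f x + ε/2 := max_le (by linarith) h1
        simp only [hf']
        linarith
    · intro x
      have hfx := abs_le.mp (hfC x)
      constructor
      · have h1 : (⨅ n, Gs n x) - ε/2 ≤ min C (f x + δ' x) :=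
          le_min (by linarith [(hLC x).2]) (by linarith [hδ'l x])
        exact le_trans h1 (le_max_right _ _)
      · refine max_le (by linarith [(hUC x).1]) ?_
        exact le_trans (min_le_right _ _) (by linarith [hδ'u x])
  -- iterate the step, halving the error
  set P : ℕ → (X → ℝ) → Prop := fun k f => Continuous f ∧ (∀ x, |f x| ≤ C) ∧
    ∀ x, (⨅ n, Gs n x) - C * (2⁻¹:ℝ)^k ≤ f x ∧ f x ≤ (⨆ n, Hs n x) + C * (2⁻¹:ℝ)^k with hP
  have inv0 : P 0 (fun _ => 0) := by
    refine ⟨continuous_const, fun x => by simpa using hC.le, fun x => ?_⟩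
    simp only [pow_zero, mul_one]
    exact ⟨by linarith [(hLC x).2], by linarith [(hUC x).1]⟩
  have stepEx : ∀ k (f : X → ℝ), P k f →
      ∃ f', P (k+1) f' ∧ ∀ x, |f' x - f x| ≤ C * (2⁻¹:ℝ)^(k+1) := by
    intro k f hfP
    obtain ⟨f', h1, h2, h3, h4⟩ := step (C*(2⁻¹:ℝ)^k) (by positivity) f hfP.1 hfP.2.1 hfP.2.2
    have heq : C*(2⁻¹:ℝ)^k/2 = C*(2⁻¹:ℝ)^(k+1) := by rw [pow_succ]; ring
    exact ⟨f', ⟨h1, h2, by rw [← heq]; exact h4⟩, by rw [← heq]; exact h3⟩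
  choose nxt hnxt1 hnxt2 using stepEx
  set F : (k : ℕ) → {f : X → ℝ // P k f} :=
    fun k => Nat.rec ⟨fun _ => 0, inv0⟩ (fun k ih => ⟨nxt k ih.1 ih.2, hnxt1 k ih.1 ih.2⟩) k
    with hF
  have hclose : ∀ k x, |(F (k+1)).1 x - (F k).1 x| ≤ C * (2⁻¹:ℝ)^(k+1) := by
    intro k x
    exact hnxt2 k (F k).1 (F k).2 x
  have hF0 : ∀ x, (F 0).1 x = 0 := fun x => rfl
  set d : ℕ → X → ℝ := fun k x => (F (k+1)).1 x - (F k).1 x with hd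
  have hd_cont : ∀ k, Continuous (d k) := fun k => ((F (k+1)).2.1).sub ((F k).2.1)
  have hd_bound : ∀ k x, ‖d k x‖ ≤ C * (2⁻¹:ℝ)^(k+1) := by
    intro k x; rw [Real.norm_eq_abs]; exact hclose k x
  have hsummable : Summable (fun k : ℕ => C * (2⁻¹:ℝ)^(k+1)) := by
    have hgeo : Summable (fun k : ℕ => (2⁻¹:ℝ)^k) :=
      summable_geometric_of_lt_one (by norm_num) (by norm_num)
    exact (hgeo.mul_left (C * 2⁻¹)).congr fun k => by rw [pow_succ]; ring
  refine ⟨fun x => ∑' k, d k x, continuous_tsum hd_cont hsummable hd_bound, ?_⟩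
  intro x
  have hsx : Summable fun k => d k x :=
    Summable.of_norm_bounded hsummable (fun k => hd_bound k x)
  have htends : Tendsto (fun K => (F K).1 x) atTop (𝓝 (∑' k, d k x)) := by
    have h1 := hsx.hasSum.tendsto_sum_nat
    have key : (fun K => ∑ k ∈ Finset.range K, d k x) = fun K => (F K).1 x := by
      funext K
      rw [show (fun k => d k x) = fun k => (F (k+1)).1 x - (F k).1 x from rfl]
      rw [Finset.sum_range_sub (f := fun k => (F k).1 x)]
      rw [hF0 x, sub_zero]
    rwa [key] at h1
  have hpow : Tendsto (fun K : ℕ => C * (2⁻¹:ℝ)^K) atTop (𝓝 0) := by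
    have := tendsto_pow_atTop_nhds_zero_of_lt_one (by norm_num : (0:ℝ) ≤ 2⁻¹) (by norm_num)
    simpa using this.const_mul C
  constructor
  · have hlo : Tendsto (fun K : ℕ => (⨅ n, Gs n x) - C * (2⁻¹:ℝ)^K) atTop (𝓝 (⨅ n, Gs n x)) := by
      simpa using tendsto_const_nhds.sub hpow
    exact le_of_tendsto_of_tendsto' hlo htends (fun K => ((F K).2.2.2 x).1)
  · have hhi : Tendsto (fun K : ℕ => (⨆ n, Hs n x) + C * (2⁻¹:ℝ)^K) atTop (𝓝 (⨆ n, Hs n x)) := by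
      simpa using tendsto_const_nhds.add hpow
    exact le_of_tendsto_of_tendsto' htends hhi (fun K => ((F K).2.2.2 x).2)

noncomputable def erealToIcc : EReal → Set.Icc (-1:ℝ) 1 := fun x =>
  EReal.rec ⟨-1, by norm_num⟩
    (fun r => ⟨(orderIsoIooNegOneOne ℝ r : ℝ),
      ⟨(orderIsoIooNegOneOne ℝ r).2.1.le, (orderIsoIooNegOneOne ℝ r).2.2.le⟩⟩)
    ⟨1, by norm_num⟩ x

lemma erealToIcc_strictMono : StrictMono erealToIcc := by
  intro a b hab
  induction a using EReal.rec with
  | bot =>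
    induction b using EReal.rec with
    | bot => exact absurd hab (lt_irrefl _)
    | coe r =>
      exact Subtype.mk_lt_mk.mpr (orderIsoIooNegOneOne ℝ r).2.1
    | top => exact Subtype.mk_lt_mk.mpr (by norm_num)
  | coe r =>
    induction b using EReal.rec with
    | bot => exact absurd hab (by simp)
    | coe s =>
      refine Subtype.mk_lt_mk.mpr ?_
      have : r < s := by exact_mod_cast hab
      exact_mod_cast (orderIsoIooNegOneOne ℝ).strictMono this
    | top => exact Subtype.mk_lt_mk.mpr (orderIsoIooNegOneOne ℝ r).2.2
  | top =>
    exact absurd hab (by simp)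

lemma erealToIcc_surjective : Function.Surjective erealToIcc := by
  rintro ⟨y, hy1, hy2⟩
  rcases eq_or_lt_of_le hy1 with h | h
  · exact ⟨⊥, by simp only [erealToIcc]; exact Subtype.ext h⟩
  rcases eq_or_lt_of_le hy2 with h' | h'
  · exact ⟨⊤, by simp only [erealToIcc]; exact Subtype.ext h'.symm⟩
  · refine ⟨((orderIsoIooNegOneOne ℝ).symm ⟨y, h, h'⟩ : ℝ), ?_⟩
    simp only [erealToIcc]
    apply Subtype.ext
    show ((orderIsoIooNegOneOne ℝ) ((orderIsoIooNegOneOne ℝ).symm ⟨y, h, h'⟩) : ℝ) = y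
    rw [OrderIso.apply_symm_apply]

/-- The order isomorphism between `EReal` and `[-1, 1]`. -/
noncomputable def erealOrderIsoIcc : EReal ≃o Set.Icc (-1:ℝ) 1 :=
  StrictMono.orderIsoOfSurjective erealToIcc erealToIcc_strictMono erealToIcc_surjective

lemma erealOrderIsoIcc_apply (x : EReal) : erealOrderIsoIcc x = erealToIcc x := rfl

lemma continuous_erealOrderIsoIcc : Continuous (erealOrderIsoIcc) :=
  OrderIso.continuous _

lemma continuous_erealOrderIsoIcc_symm : Continuous (erealOrderIsoIcc.symm) :=
  OrderIso.continuous _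

end Aux

section Main

open Set Filter Topology

theorem stmt1 {X : Type*} [TopologicalSpace X]
    (Y : Set X) (hY : FunctionallyClosed Y)
    (g h : X → EReal) (hgh : CountablePairOfHahn g h)
    (f₀ : X → EReal) (hf₀ : Continuous f₀)
    (hbound : ∀ y ∈ Y, g y ≤ f₀ y ∧ f₀ y ≤ h y) :
    ∃ f : X → EReal, Continuous f ∧ (∀ y ∈ Y, f y = f₀ y) ∧
      ∀ x, g x ≤ f x ∧ f x ≤ h x := by
  classical
  obtain ⟨α, hαc, hα01, hαY⟩ := hY
  obtain ⟨gs, hs, hgsc, hhsc, hkey⟩ := hgh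
  set E := erealOrderIsoIcc with hE
  set φ : EReal → ℝ := fun x => (E x : ℝ) with hφ
  have hφc : Continuous φ := continuous_subtype_val.comp continuous_erealOrderIsoIcc
  have hφmono : Monotone φ := fun a b hab => Subtype.coe_le_coe.mpr (E.monotone hab)
  have hφbd : ∀ x, -1 ≤ φ x ∧ φ x ≤ 1 := fun x => (E x).2
  have hφinf : ∀ a : ℕ → EReal, φ (⨅ n, a n) = ⨅ n, φ (a n) := by
    intro a
    exact Monotone.map_ciInf_of_continuousAt (hφc.continuousAt) hφmono (OrderBot.bddBelow _)
  have hφsup : ∀ a : ℕ → EReal, φ (⨆ n, a n) = ⨆ n, φ (a n) := by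
    intro a
    exact Monotone.map_ciSup_of_continuousAt (hφc.continuousAt) hφmono (OrderTop.bddAbove _)
  -- the index pairing
  set e : ℕ × ℕ ≃ ℕ := Denumerable.eqv (ℕ × ℕ) with he
  set nn : ℕ → ℕ := fun k => (e.symm k).1 with hnn
  set mm : ℕ → ℕ := fun k => (e.symm k).2 with hmm
  -- the modified families
  set Gs : ℕ → X → ℝ := fun k x => max (φ (gs (nn k) x)) (φ (f₀ x) - (mm k : ℝ) * α x) with hGs
  set Hs : ℕ → X → ℝ := fun k x => min (φ (hs (nn k) x)) (φ (f₀ x) + (mm k : ℝ) * α x) with hHs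
  have hGsc : ∀ k, Continuous (Gs k) := fun k =>
    (hφc.comp (hgsc _)).max ((hφc.comp hf₀).sub (continuous_const.mul hαc))
  have hHsc : ∀ k, Continuous (Hs k) := fun k =>
    (hφc.comp (hhsc _)).min ((hφc.comp hf₀).add (continuous_const.mul hαc))
  have hmul_nonneg : ∀ k x, 0 ≤ (mm k : ℝ) * α x := fun k x =>
    mul_nonneg (Nat.cast_nonneg _) (hα01 x).1
  have hGsb : ∀ k x, |Gs k x| ≤ 1 := by
    intro k x
    rw [abs_le]
    constructor
    · exact le_max_of_le_left (hφbd _).1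
    · exact max_le (hφbd _).2 (by linarith [(hφbd (f₀ x)).2, hmul_nonneg k x])
  have hHsb : ∀ k x, |Hs k x| ≤ 1 := by
    intro k x
    rw [abs_le]
    constructor
    · exact le_min (hφbd _).1 (by linarith [(hφbd (f₀ x)).1, hmul_nonneg k x])
    · exact min_le_of_left_le (hφbd _).2
  have hbddG : ∀ x, BddBelow (Set.range fun k => Gs k x) := by
    intro x; refine ⟨-1, ?_⟩; rintro _ ⟨k, rfl⟩; linarith [abs_le.mp (hGsb k x)]
  have hbddH : ∀ x, BddAbove (Set.range fun k => Hs k x) := by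
    intro x; refine ⟨1, ?_⟩; rintro _ ⟨k, rfl⟩; linarith [abs_le.mp (hHsb k x)]
  -- basic identities
  have hg_eq : ∀ x, φ (g x) = ⨅ n, φ (gs n x) := by
    intro x; rw [(hkey x).1]; exact hφinf _
  have hh_eq : ∀ x, φ (h x) = ⨆ n, φ (hs n x) := by
    intro x; rw [(hkey x).2.1]; exact hφsup _
  -- (A) φ(g) is below the new inf
  have hA : ∀ x, φ (g x) ≤ ⨅ k, Gs k x := by
    intro x
    refine le_ciInf fun k => le_max_of_le_left (hφmono ?_)
    rw [(hkey x).1]; exact iInf_le (fun n => gs n x) (nn k)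
  have hB : ∀ x, (⨆ k, Hs k x) ≤ φ (h x) := by
    intro x
    refine ciSup_le fun k => min_le_of_left_le (hφmono ?_)
    rw [(hkey x).2.1]; exact le_iSup (fun n => hs n x) (nn k)
  -- (C) on Y the inf and sup collapse to φ(f₀)
  have hC_inf : ∀ x ∈ Y, (⨅ k, Gs k x) = φ (f₀ x) := by
    intro x hx
    have hαx : α x = 0 := by
      have := hαY ▸ hx; simpa using this
    apply le_antisymm
    · by_contra hlt
      push_neg at hlt
      have h1 : φ (g x) ≤ φ (f₀ x) := hφmono (hbound x hx).1
      have h2 : (⨅ n, φ (gs n x)) < ⨅ k, Gs k x := by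
        rw [← hg_eq]; exact lt_of_le_of_lt h1 hlt
      obtain ⟨n, hn⟩ := exists_lt_of_ciInf_lt h2
      have hkval : Gs (e (n, 0)) x = max (φ (gs n x)) (φ (f₀ x)) := by
        simp only [hGs, hnn, hmm, Equiv.symm_apply_apply, hαx]
        norm_num
      have hle1 : (⨅ k, Gs k x) ≤ Gs (e (n, 0)) x := ciInf_le (hbddG x) _
      rw [hkval] at hle1
      have : max (φ (gs n x)) (φ (f₀ x)) < ⨅ k, Gs k x := max_lt hn hlt
      linarith
    · refine le_ciInf fun k => ?_
      refine le_max_of_le_right ?_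
      rw [hαx]
      simp
  have hC_sup : ∀ x ∈ Y, (⨆ k, Hs k x) = φ (f₀ x) := by
    intro x hx
    have hαx : α x = 0 := by
      have := hαY ▸ hx; simpa using this
    apply le_antisymm
    · refine ciSup_le fun k => ?_
      refine min_le_of_right_le ?_
      rw [hαx]
      simp
    · by_contra hlt
      push_neg at hlt
      have h1 : φ (f₀ x) ≤ φ (h x) := hφmono (hbound x hx).2
      have h2 : (⨆ k, Hs k x) < ⨆ n, φ (hs n x) := by
        rw [← hh_eq]; exact lt_of_lt_of_le hlt h1
      obtain ⟨n, hn⟩ := exists_lt_of_lt_ciSup h2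
      have hkval : Hs (e (n, 0)) x = min (φ (hs n x)) (φ (f₀ x)) := by
        simp only [hHs, hnn, hmm, Equiv.symm_apply_apply, hαx]
        norm_num
      have hle1 : Hs (e (n, 0)) x ≤ ⨆ k, Hs k x := le_ciSup (hbddH x) _
      rw [hkval] at hle1
      have : (⨆ k, Hs k x) < min (φ (hs n x)) (φ (f₀ x)) := lt_min hn hlt
      linarith
  -- (D) off Y the inf and sup reach the original ones
  have hD_inf : ∀ x, x ∉ Y → (⨅ k, Gs k x) ≤ φ (g x) := by
    intro x hx
    have hαpos : 0 < α x := by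
      rcases (hα01 x).1.lt_or_eq with h' | h'
      · exact h'
      · exact absurd (by rw [hαY]; simpa using h'.symm) hx
    rw [hg_eq]
    refine le_ciInf fun n => ?_
    obtain ⟨m, hm⟩ := exists_nat_ge ((φ (f₀ x) - φ (gs n x)) / α x)
    have hmle : φ (f₀ x) - (m:ℝ) * α x ≤ φ (gs n x) := by
      rw [div_le_iff₀ hαpos] at hm
      linarith
    have hkval : Gs (e (n, m)) x = φ (gs n x) := by
      simp only [hGs, hnn, hmm, Equiv.symm_apply_apply]
      exact max_eq_left hmle
    calc (⨅ k, Gs k x) ≤ Gs (e (n, m)) x := ciInf_le (hbddG x) _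
      _ = φ (gs n x) := hkval
  have hD_sup : ∀ x, x ∉ Y → φ (h x) ≤ ⨆ k, Hs k x := by
    intro x hx
    have hαpos : 0 < α x := by
      rcases (hα01 x).1.lt_or_eq with h' | h'
      · exact h'
      · exact absurd (by rw [hαY]; simpa using h'.symm) hx
    rw [hh_eq]
    refine ciSup_le fun n => ?_
    obtain ⟨m, hm⟩ := exists_nat_ge ((φ (hs n x) - φ (f₀ x)) / α x)
    have hmle : φ (hs n x) ≤ φ (f₀ x) + (m:ℝ) * α x := by
      rw [div_le_iff₀ hαpos] at hm
      linarith
    have hkval : Hs (e (n, m)) x = φ (hs n x) := by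
      simp only [hHs, hnn, hmm, Equiv.symm_apply_apply]
      exact min_eq_left hmle
    calc φ (hs n x) = Hs (e (n, m)) x := hkval.symm
      _ ≤ ⨆ k, Hs k x := le_ciSup (hbddH x) _
  -- insert
  have hle : ∀ x, (⨅ k, Gs k x) ≤ ⨆ k, Hs k x := by
    intro x
    by_cases hx : x ∈ Y
    · rw [hC_inf x hx, hC_sup x hx]
    · calc (⨅ k, Gs k x) ≤ φ (g x) := hD_inf x hx
        _ ≤ φ (h x) := hφmono (hkey x).2.2
        _ ≤ ⨆ k, Hs k x := hD_sup x hx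
  obtain ⟨ft, hftc, hft⟩ := insertion Gs Hs hGsc hHsc 1 one_pos (fun k x => ⟨hGsb k x, hHsb k x⟩) hle
  have hmem : ∀ x, ft x ∈ Set.Icc (-1:ℝ) 1 := by
    intro x
    constructor
    · linarith [(hφbd (g x)).1, hA x, (hft x).1]
    · linarith [(hφbd (h x)).2, hB x, (hft x).2]
  refine ⟨fun x => E.symm ⟨ft x, hmem x⟩, ?_, ?_, ?_⟩
  · exact continuous_erealOrderIsoIcc_symm.comp (hftc.subtype_mk _)
  · intro y hy
    have hfty : ft y = φ (f₀ y) :=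
      le_antisymm (by rw [← hC_sup y hy]; exact (hft y).2) (by rw [← hC_inf y hy]; exact (hft y).1)
    have h2 : (⟨ft y, hmem y⟩ : Set.Icc (-1:ℝ) 1) = E (f₀ y) := Subtype.ext hfty
    show E.symm ⟨ft y, hmem y⟩ = f₀ y
    rw [h2, OrderIso.symm_apply_apply]
  · intro x
    constructor
    · show g x ≤ E.symm ⟨ft x, hmem x⟩
      rw [OrderIso.le_symm_apply]
      exact Subtype.coe_le_coe.mp (by exact le_trans (hA x) (hft x).1)
    · show E.symm ⟨ft x, hmem x⟩ ≤ h x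
      rw [OrderIso.symm_apply_le]
      exact Subtype.coe_le_coe.mp (by exact le_trans (hft x).2 (hB x))

end Main
end

section
/- Let X be a perfectly normal space, Y a closed subspace of X, (g,h) a pair of Hahn on X, and f₀ : Y → ℝ̄ a continuous function such that g(y) ≤ f₀(y) ≤ h(y) for every y ∈ Y. Then there exists a continuous function f : X → ℝ̄ such that f(y) = f₀(y) for every y ∈ Y and g(x) ≤ f(x) ≤ h(x) for every x ∈ X. -/
open Set Filter Topology BoundedContinuousFunction

-- counting lemmas
lemma count_lower (N : ℕ) (t : ℝ) (ht : t ≤ 1) :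
    (N : ℝ) * t - 1 ≤ ((Finset.range N).filter (fun k : ℕ => ((k : ℝ) + 1) ≤ N * t)).card := by
  rcases le_or_gt (N * t) 0 with h0 | h0
  · have : (N:ℝ) * t - 1 ≤ -1 + 0 := by linarith
    calc (N:ℝ)*t - 1 ≤ 0 := by linarith
    _ ≤ _ := by positivity
  · set m : ℕ := min N ⌊(N:ℝ) * t⌋₊ with hm
    have hsub : Finset.range m ⊆ (Finset.range N).filter (fun k : ℕ => ((k : ℝ) + 1) ≤ N * t) := by
      intro k hk
      simp only [Finset.mem_range] at hk
      have hk1 : k < N := lt_of_lt_of_le hk (min_le_left _ _)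
      have hk2 : k < ⌊(N:ℝ)*t⌋₊ := lt_of_lt_of_le hk (min_le_right _ _)
      simp only [Finset.mem_filter, Finset.mem_range]
      refine ⟨hk1, ?_⟩
      have : (k:ℝ) + 1 ≤ (⌊(N:ℝ)*t⌋₊ : ℝ) := by exact_mod_cast hk2
      exact this.trans (Nat.floor_le h0.le)
    have hcard : m ≤ ((Finset.range N).filter (fun k : ℕ => ((k : ℝ) + 1) ≤ N * t)).card := by
      simpa using Finset.card_le_card hsub
    have : (N:ℝ) * t - 1 ≤ m := by
      rcases min_cases N ⌊(N:ℝ)*t⌋₊ with ⟨he, hle⟩ | ⟨he, hlt⟩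
      · rw [hm, he]
        have : (N:ℝ) * t ≤ N := by nlinarith [Nat.cast_nonneg (α := ℝ) N]
        linarith
      · rw [hm, he]
        have := Nat.lt_floor_add_one ((N:ℝ)*t)
        push_cast [hm] at this ⊢
        linarith
    calc (N:ℝ)*t - 1 ≤ m := this
    _ ≤ _ := by exact_mod_cast hcard

lemma count_upper (N : ℕ) (t : ℝ) (ht : 0 ≤ t) :
    (((Finset.range N).filter (fun k : ℕ => (k : ℝ) < N * t)).card : ℝ) ≤ N * t + 1 := by
  have hsub : (Finset.range N).filter (fun k : ℕ => (k : ℝ) < N * t) ⊆ Finset.range ⌈(N:ℝ)*t⌉₊ := by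
    intro k hk
    simp only [Finset.mem_filter, Finset.mem_range] at hk ⊢
    exact Nat.lt_ceil.2 hk.2
  have := (Finset.card_le_card hsub).trans_eq (Finset.card_range _)
  have h2 : (⌈(N:ℝ)*t⌉₊ : ℝ) < N * t + 1 := Nat.ceil_lt_add_one (by positivity)
  calc (((Finset.range N).filter (fun k : ℕ => (k : ℝ) < N * t)).card : ℝ)
      ≤ (⌈(N:ℝ)*t⌉₊ : ℝ) := by exact_mod_cast this
    _ ≤ N * t + 1 := h2.le

lemma approx_insertion {X : Type*} [TopologicalSpace X] [NormalSpace X]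
    {g h : X → ℝ} (hg : UpperSemicontinuous g) (hh : LowerSemicontinuous h)
    (hgh : ∀ x, g x ≤ h x) (hg1 : ∀ x, g x ≤ 1) (hh0 : ∀ x, 0 ≤ h x)
    {ε : ℝ} (hε : 0 < ε) :
    ∃ f : X → ℝ, Continuous f ∧ (∀ x, 0 ≤ f x ∧ f x ≤ 1) ∧
      ∀ x, g x - ε ≤ f x ∧ f x ≤ h x + ε := by
  obtain ⟨N, hN1, hNε⟩ : ∃ N : ℕ, 1 ≤ N ∧ 1 / (N : ℝ) ≤ ε := by
    obtain ⟨N, hN⟩ := exists_nat_one_div_lt hε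
    exact ⟨N + 1, Nat.le_add_left 1 N, by exact_mod_cast hN.le⟩
  have hNpos : (0:ℝ) < N := by exact_mod_cast hN1
  -- Urysohn functions
  have hsep : ∀ k : ℕ, ∃ u : C(X, ℝ), Set.EqOn u 0 {x | h x ≤ (k:ℝ)/N} ∧
      Set.EqOn u 1 {x | ((k:ℝ)+1)/N ≤ g x} ∧ ∀ x, u x ∈ Icc (0:ℝ) 1 := by
    intro k
    refine exists_continuous_zero_one_of_isClosed ?_ ?_ ?_
    · exact hh.isClosed_preimage _
    · exact hg.isClosed_preimage _
    · rw [Set.disjoint_left]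
      intro x hx1 hx2
      simp only [mem_setOf_eq] at hx1 hx2
      have := (hx2.trans (hgh x)).trans hx1
      have : ((k:ℝ)+1)/N ≤ k/N := this
      rw [div_le_div_iff_of_pos_right hNpos] at this
      linarith
  choose u hu0 hu1 hu01 using hsep
  refine ⟨fun x => (N:ℝ)⁻¹ * ∑ k ∈ Finset.range N, u k x, ?_, ?_, ?_⟩
  · exact continuous_const.mul (continuous_finset_sum _ fun k _ => (u k).continuous)
  · intro x
    constructor
    · have : ∀ k ∈ Finset.range N, (0:ℝ) ≤ u k x := fun k _ => (hu01 k x).1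
      have := Finset.sum_nonneg this
      positivity
    · have hb : ∑ k ∈ Finset.range N, u k x ≤ ∑ k ∈ Finset.range N, (1:ℝ) :=
        Finset.sum_le_sum fun k _ => (hu01 k x).2
      rw [Finset.sum_const, Finset.card_range, nsmul_eq_mul, mul_one] at hb
      rw [inv_mul_le_iff₀ hNpos]
      linarith
  · intro x
    constructor
    · -- lower bound
      have key : ((((Finset.range N).filter (fun k : ℕ => ((k : ℝ) + 1) ≤ N * g x)).card : ℝ))
          ≤ ∑ k ∈ Finset.range N, u k x := by
        rw [← Finset.sum_filter_add_sum_filter_not (Finset.range N)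
          (fun k : ℕ => ((k : ℝ) + 1) ≤ N * g x) (fun k => u k x)]
        have h1 : ∑ k ∈ (Finset.range N).filter (fun k : ℕ => ((k : ℝ) + 1) ≤ N * g x),
            u k x = ∑ k ∈ (Finset.range N).filter (fun k : ℕ => ((k : ℝ) + 1) ≤ N * g x),
            (1:ℝ) := by
          refine Finset.sum_congr rfl fun k hk => ?_
          simp only [Finset.mem_filter] at hk
          have : ((k:ℝ)+1)/N ≤ g x := by
            rw [div_le_iff₀ hNpos]; linarith [hk.2]
          exact hu1 k this
        rw [h1, Finset.sum_const, nsmul_eq_mul, mul_one]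
        have h2 : (0:ℝ) ≤ ∑ k ∈ (Finset.range N).filter
            (fun k : ℕ => ¬ (((k : ℝ) + 1) ≤ N * g x)), u k x :=
          Finset.sum_nonneg fun k _ => (hu01 k x).1
        linarith
      have hcl := count_lower N (g x) (hg1 x)
      have hmul : (N:ℝ)⁻¹ * ((N:ℝ) * g x - 1) ≤ (N:ℝ)⁻¹ * ∑ k ∈ Finset.range N, u k x :=
        mul_le_mul_of_nonneg_left (hcl.trans key) (by positivity)
      have hexp : (N:ℝ)⁻¹ * ((N:ℝ) * g x - 1) = g x - 1/N := by
        field_simp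
      rw [hexp] at hmul
      simp only []
      linarith
    · -- upper bound
      have key : ∑ k ∈ Finset.range N, u k x
          ≤ (((Finset.range N).filter (fun k : ℕ => (k : ℝ) < N * h x)).card : ℝ) := by
        rw [← Finset.sum_filter_add_sum_filter_not (Finset.range N)
          (fun k : ℕ => (k : ℝ) < N * h x) (fun k => u k x)]
        have h1 : ∑ k ∈ (Finset.range N).filter (fun k : ℕ => (k : ℝ) < N * h x), u k x
            ≤ ∑ k ∈ (Finset.range N).filter (fun k : ℕ => (k : ℝ) < N * h x), (1:ℝ) :=
          Finset.sum_le_sum fun k _ => (hu01 k x).2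
        have h2 : ∑ k ∈ (Finset.range N).filter (fun k : ℕ => ¬ ((k : ℝ) < N * h x)),
            u k x = 0 := by
          refine Finset.sum_eq_zero fun k hk => ?_
          simp only [Finset.mem_filter, not_lt] at hk
          have : h x ≤ (k:ℝ)/N := by
            rw [le_div_iff₀ hNpos]; linarith [hk.2]
          exact hu0 k this
        rw [h2, add_zero]
        calc _ ≤ _ := h1
        _ = _ := by rw [Finset.sum_const, nsmul_eq_mul, mul_one]
      have hcu := count_upper N (h x) (hh0 x)
      have : (N:ℝ)⁻¹ * ∑ k ∈ Finset.range N, u k x ≤ (N:ℝ)⁻¹ * ((N:ℝ) * h x + 1) :=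
        mul_le_mul_of_nonneg_left (key.trans hcu) (by positivity)
      have hexp : (N:ℝ)⁻¹ * ((N:ℝ) * h x + 1) = h x + 1/N := by
        field_simp
      rw [hexp] at this
      linarith

lemma usc_max {α γ : Type*} [TopologicalSpace α] [LinearOrder γ] {f g : α → γ}
    (hf : UpperSemicontinuous f) (hg : UpperSemicontinuous g) :
    UpperSemicontinuous (fun x => max (f x) (g x)) := by
  intro x y hy
  simp only [max_lt_iff] at hy
  filter_upwards [hf x y hy.1, hg x y hy.2] with a h1 h2
  exact max_lt h1 h2

lemma lsc_min {α γ : Type*} [TopologicalSpace α] [LinearOrder γ] {f g : α → γ}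
    (hf : LowerSemicontinuous f) (hg : LowerSemicontinuous g) :
    LowerSemicontinuous (fun x => min (f x) (g x)) := by
  intro x y hy
  simp only [lt_min_iff] at hy
  filter_upwards [hf x y hy.1, hg x y hy.2] with a h1 h2
  exact lt_min h1 h2

noncomputable def mkBCF {X : Type*} [TopologicalSpace X] (f : X → ℝ) (hf : Continuous f)
    (hb : ∀ x, 0 ≤ f x ∧ f x ≤ 1) : X →ᵇ ℝ :=
  BoundedContinuousFunction.mkOfBound ⟨f, hf⟩ 1 (by
    intro x y
    rw [Real.dist_eq, abs_le]
    constructor <;> simp only [ContinuousMap.coe_mk] <;>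
      [linarith [(hb x).1, (hb y).2]; linarith [(hb x).2, (hb y).1]])

@[simp] lemma mkBCF_apply {X : Type*} [TopologicalSpace X] (f : X → ℝ) (hf : Continuous f)
    (hb : ∀ x, 0 ≤ f x ∧ f x ≤ 1) (x : X) : mkBCF f hf hb x = f x := rfl

theorem katetov_tong_real {X : Type*} [TopologicalSpace X] [NormalSpace X]
    {g h : X → ℝ} (hg : UpperSemicontinuous g) (hh : LowerSemicontinuous h)
    (hgh : ∀ x, g x ≤ h x) (hg1 : ∀ x, g x ≤ 1) (hh0 : ∀ x, 0 ≤ h x) :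
    ∃ f : X → ℝ, Continuous f ∧ (∀ x, 0 ≤ f x ∧ f x ≤ 1) ∧
      ∀ x, g x ≤ f x ∧ f x ≤ h x := by
  classical
  set P : ℕ → (X →ᵇ ℝ) → Prop := fun n v =>
    (∀ x, 0 ≤ v x ∧ v x ≤ 1) ∧ ∀ x, g x - (2⁻¹:ℝ)^n ≤ v x ∧ v x ≤ h x + (2⁻¹:ℝ)^n with hP
  -- base
  have base : ∃ v : X →ᵇ ℝ, P 0 v := by
    obtain ⟨f, hfc, hfb, hf⟩ := approx_insertion hg hh hgh hg1 hh0 one_pos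
    refine ⟨mkBCF f hfc hfb, ?_⟩
    constructor
    · intro x; exact hfb x
    · intro x
      simpa using hf x
  -- step
  have step : ∀ n (v : X →ᵇ ℝ), P n v →
      ∃ w : X →ᵇ ℝ, P (n+1) w ∧ dist v w ≤ 3 * (2⁻¹:ℝ)^n := by
    intro n v hv
    obtain ⟨hv01, hvs⟩ := hv
    have hpow : (0:ℝ) < (2⁻¹:ℝ)^n := by positivity
    set g' : X → ℝ := fun x => max (g x) (v x - 2*(2⁻¹:ℝ)^n) with hg'
    set h' : X → ℝ := fun x => min (h x) (v x + 2*(2⁻¹:ℝ)^n) with hh'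
    have hg'usc : UpperSemicontinuous g' :=
      usc_max hg ((v.continuous.sub continuous_const).upperSemicontinuous)
    have hh'lsc : LowerSemicontinuous h' :=
      lsc_min hh ((v.continuous.add continuous_const).lowerSemicontinuous)
    have hg'h' : ∀ x, g' x ≤ h' x := by
      intro x
      have h1 := (hvs x).1; have h2 := (hvs x).2
      have := hgh x
      refine max_le (le_min (hgh x) (by linarith)) (le_min (by linarith) (by linarith))
    have hg'1 : ∀ x, g' x ≤ 1 := fun x =>
      max_le (hg1 x) (by linarith [(hv01 x).2])
    have hh'0 : ∀ x, 0 ≤ h' x := fun x =>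
      le_min (hh0 x) (by linarith [(hv01 x).1])
    obtain ⟨f, hfc, hfb, hf⟩ := approx_insertion hg'usc hh'lsc hg'h' hg'1 hh'0
      (ε := (2⁻¹:ℝ)^(n+1)) (by positivity)
    refine ⟨mkBCF f hfc hfb, ⟨fun x => hfb x, ?_⟩, ?_⟩
    · intro x
      have h1 := (hf x).1; have h2 := (hf x).2
      have hga : g x ≤ g' x := le_max_left _ _
      have hha : h' x ≤ h x := min_le_left _ _
      constructor
      · simp only [mkBCF_apply]; calc g x - (2⁻¹:ℝ)^(n+1) ≤ g' x - (2⁻¹:ℝ)^(n+1) := by linarith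
          _ ≤ _ := h1
      · simp only [mkBCF_apply]; calc (mkBCF f hfc hfb) x ≤ h' x + (2⁻¹:ℝ)^(n+1) := h2
          _ ≤ h x + (2⁻¹:ℝ)^(n+1) := by linarith
    · rw [BoundedContinuousFunction.dist_le (by positivity)]
      intro x
      have h1 := (hf x).1; have h2 := (hf x).2
      have hga : v x - 2*(2⁻¹:ℝ)^n ≤ g' x := le_max_right _ _
      have hha : h' x ≤ v x + 2*(2⁻¹:ℝ)^n := min_le_right _ _
      have hps : (2⁻¹:ℝ)^(n+1) ≤ (2⁻¹:ℝ)^n := by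
        apply pow_le_pow_of_le_one <;> norm_num
      rw [Real.dist_eq, abs_le]
      constructor
      · simp only [mkBCF_apply]; linarith
      · simp only [mkBCF_apply]; linarith
  choose! W hW1 hW2 using step
  obtain ⟨v0, hv0⟩ := base
  set u : ℕ → (X →ᵇ ℝ) := fun n => Nat.rec v0 W n with hu
  have hu0 : u 0 = v0 := rfl
  have husucc : ∀ n, u (n+1) = W n (u n) := fun n => rfl
  have hPu : ∀ n, P n (u n) := by
    intro n; induction n with
    | zero => exact hv0
    | succ n ih => rw [husucc]; exact hW1 n (u n) ih
  have hdist : ∀ n, dist (u n) (u (n+1)) ≤ 3 * (2⁻¹:ℝ)^n := by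
    intro n; rw [husucc]; exact hW2 n (u n) (hPu n)
  have hcauchy : CauchySeq u := cauchySeq_of_le_geometric (2⁻¹:ℝ) 3 (by norm_num) hdist
  obtain ⟨F, hF⟩ := cauchySeq_tendsto_of_complete hcauchy
  have hptw : ∀ x, Tendsto (fun n => u n x) atTop (𝓝 (F x)) := by
    intro x
    rw [tendsto_iff_dist_tendsto_zero]
    refine squeeze_zero (fun n => dist_nonneg) (fun n => BoundedContinuousFunction.dist_coe_le_dist x) ?_
    rw [← tendsto_iff_dist_tendsto_zero]
    exact hF
  have hpow0 : Tendsto (fun n => (2⁻¹:ℝ)^n) atTop (𝓝 0) :=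
    tendsto_pow_atTop_nhds_zero_of_lt_one (by norm_num) (by norm_num)
  refine ⟨F, F.continuous, ?_, ?_⟩
  · intro x
    constructor
    · exact ge_of_tendsto' (hptw x) fun n => (hPu n).1 x |>.1
    · exact le_of_tendsto' (hptw x) fun n => ((hPu n).1 x).2
  · intro x
    constructor
    · have : Tendsto (fun n => g x - (2⁻¹:ℝ)^n) atTop (𝓝 (g x - 0)) :=
        tendsto_const_nhds.sub hpow0
      rw [sub_zero] at this
      exact le_of_tendsto_of_tendsto' this (hptw x) fun n => ((hPu n).2 x).1
    · have : Tendsto (fun n => h x + (2⁻¹:ℝ)^n) atTop (𝓝 (h x + 0)) :=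
        tendsto_const_nhds.add hpow0
      rw [add_zero] at this
      exact le_of_tendsto_of_tendsto' (hptw x) this fun n => ((hPu n).2 x).2

noncomputable def eiso : EReal ≃o Icc (0:ℝ) 1 :=
  EReal.expOrderIso.trans ENNReal.orderIsoUnitIntervalBirational

theorem katetov_tong_ereal {X : Type*} [TopologicalSpace X] [NormalSpace X]
    {g h : X → EReal} (hg : UpperSemicontinuous g) (hh : LowerSemicontinuous h)
    (hgh : ∀ x, g x ≤ h x) :
    ∃ f : X → EReal, Continuous f ∧ ∀ x, g x ≤ f x ∧ f x ≤ h x := by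
  have hiso_cont : Continuous (eiso : EReal → Icc (0:ℝ) 1) :=
    (OrderIso.toHomeomorph eiso).continuous
  have hiso_symm_cont : Continuous (eiso.symm : Icc (0:ℝ) 1 → EReal) :=
    (OrderIso.toHomeomorph eiso).symm.continuous
  set ψ : EReal → ℝ := fun e => (eiso e : ℝ) with hψ
  have ψcont : Continuous ψ := continuous_subtype_val.comp hiso_cont
  have ψmono : Monotone ψ := fun a b hab => Subtype.coe_le_coe.2 (eiso.monotone hab)
  have hG : UpperSemicontinuous (ψ ∘ g) := ψcont.comp_upperSemicontinuous hg ψmono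
  have hH : LowerSemicontinuous (ψ ∘ h) := ψcont.comp_lowerSemicontinuous hh ψmono
  obtain ⟨F, hFc, hFb, hFs⟩ := katetov_tong_real hG hH
    (fun x => ψmono (hgh x)) (fun x => (eiso (g x)).2.2) (fun x => (eiso (h x)).2.1)
  refine ⟨fun x => eiso.symm ⟨F x, (hFb x).1, (hFb x).2⟩, ?_, ?_⟩
  · exact hiso_symm_cont.comp (hFc.subtype_mk _)
  · intro x
    constructor
    · have : eiso (g x) ≤ ⟨F x, (hFb x).1, (hFb x).2⟩ := Subtype.coe_le_coe.1 (hFs x).1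
      simpa using eiso.symm.monotone this
    · have : (⟨F x, (hFb x).1, (hFb x).2⟩ : Icc (0:ℝ) 1) ≤ eiso (h x) :=
        Subtype.coe_le_coe.1 (hFs x).2
      simpa using eiso.symm.monotone this

theorem stmt2 {X : Type*} [TopologicalSpace X] [PerfectlyNormalSpace X]
    (Y : Set X) (hY : IsClosed Y)
    (g h : X → EReal) (hle : g ≤ h)
    (hg : UpperSemicontinuous g) (hh : LowerSemicontinuous h)
    (f₀ : Y → EReal) (hf₀ : Continuous f₀)
    (hbound : ∀ y : Y, g y ≤ f₀ y ∧ f₀ y ≤ h y) :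
    ∃ f : X → EReal, Continuous f ∧ (∀ y : Y, f y = f₀ y) ∧
      ∀ x, g x ≤ f x ∧ f x ≤ h x := by
  classical
  set e : X → EReal := fun x => if hx : x ∈ Y then f₀ ⟨x, hx⟩ else ⊥ with he
  set e' : X → EReal := fun x => if hx : x ∈ Y then f₀ ⟨x, hx⟩ else ⊤ with he'
  have heY : ∀ (x : X) (hx : x ∈ Y), e x = f₀ ⟨x, hx⟩ := fun x hx => dif_pos hx
  have he'Y : ∀ (x : X) (hx : x ∈ Y), e' x = f₀ ⟨x, hx⟩ := fun x hx => dif_pos hx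
  -- e is upper semicontinuous
  have heUSC : UpperSemicontinuous e := by
    intro x c hc
    by_cases hx : x ∈ Y
    · rw [heY x hx] at hc
      have hcont : ContinuousAt f₀ ⟨x, hx⟩ := hf₀.continuousAt
      have hmem : Iio c ∈ nhds (f₀ ⟨x, hx⟩) := Iio_mem_nhds hc
      have := hcont hmem
      rw [Filter.mem_map, nhds_induced, Filter.mem_comap] at this
      obtain ⟨t, ht, hts⟩ := this
      filter_upwards [ht] with a ha
      by_cases ha' : a ∈ Y
      · rw [heY a ha']
        exact hts (show ((⟨a, ha'⟩ : Y) : X) ∈ t from ha)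
      · rw [he]
        simp only [dif_neg ha']
        exact lt_of_le_of_lt bot_le hc
    · have hb : e x = ⊥ := dif_neg hx
      filter_upwards [hY.isOpen_compl.mem_nhds hx] with a ha
      rw [he]; simp only [dif_neg ha]
      rw [hb] at hc
      exact lt_of_le_of_lt bot_le hc
  -- e' is lower semicontinuous
  have he'LSC : LowerSemicontinuous e' := by
    intro x c hc
    by_cases hx : x ∈ Y
    · rw [he'Y x hx] at hc
      have hcont : ContinuousAt f₀ ⟨x, hx⟩ := hf₀.continuousAt
      have hmem : Ioi c ∈ nhds (f₀ ⟨x, hx⟩) := Ioi_mem_nhds hc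
      have := hcont hmem
      rw [Filter.mem_map, nhds_induced, Filter.mem_comap] at this
      obtain ⟨t, ht, hts⟩ := this
      filter_upwards [ht] with a ha
      by_cases ha' : a ∈ Y
      · rw [he'Y a ha']
        exact hts (show ((⟨a, ha'⟩ : Y) : X) ∈ t from ha)
      · rw [he']
        simp only [dif_neg ha']
        exact lt_of_lt_of_le hc le_top
    · have hb : e' x = ⊤ := dif_neg hx
      filter_upwards [hY.isOpen_compl.mem_nhds hx] with a ha
      rw [he']; simp only [dif_neg ha]
      rw [hb] at hc
      exact lt_of_lt_of_le hc le_top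
  set g' : X → EReal := fun x => max (g x) (e x) with hg'
  set h' : X → EReal := fun x => min (h x) (e' x) with hh'
  have hg'USC : UpperSemicontinuous g' := by
    intro x c hc
    simp only [hg', max_lt_iff] at hc ⊢
    filter_upwards [hg x c hc.1, heUSC x c hc.2] with a h1 h2 using ⟨h1, h2⟩
  have hh'LSC : LowerSemicontinuous h' := by
    intro x c hc
    simp only [hh', lt_min_iff] at hc ⊢
    filter_upwards [hh x c hc.1, he'LSC x c hc.2] with a h1 h2 using ⟨h1, h2⟩
  have hg'h' : ∀ x, g' x ≤ h' x := by
    intro x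
    refine max_le (le_min (hle x) ?_) (le_min ?_ ?_)
    · by_cases hx : x ∈ Y
      · rw [he'Y x hx]; exact (hbound ⟨x, hx⟩).1
      · rw [he']; simp only [dif_neg hx]; exact le_top
    · by_cases hx : x ∈ Y
      · rw [heY x hx]; exact (hbound ⟨x, hx⟩).2
      · rw [he]; simp only [dif_neg hx]; exact bot_le
    · by_cases hx : x ∈ Y
      · rw [heY x hx, he'Y x hx]
      · rw [he, he']; simp only [dif_neg hx]; exact bot_le
  obtain ⟨f, hfc, hfs⟩ := katetov_tong_ereal hg'USC hh'LSC hg'h'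
  refine ⟨f, hfc, ?_, ?_⟩
  · rintro ⟨y, hy⟩
    have h1 : e y ≤ f y := le_trans (le_max_right (g y) (e y)) (hfs y).1
    have h2 : f y ≤ e' y := le_trans (hfs y).2 (min_le_right (h y) (e' y))
    rw [heY y hy] at h1
    rw [he'Y y hy] at h2
    exact le_antisymm h2 h1
  · intro x
    exact ⟨le_trans (le_max_left _ _) (hfs x).1, le_trans (hfs x).2 (min_le_left _ _)⟩
end

section
/- Let X be a topological space and g,h : X → ℝ̄. If (g,h) is a countable pair of Hahn on X and both g and h are functions of the first stable Baire class, then (g,h) is a stable pair of Hahn on X. -/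
open Filter Topology
open scoped ENNReal


set_option linter.unusedSectionVars false

namespace Stmt4Aux

/-! ### The blow-up function `xi : ℝ → EReal` -/

noncomputable def zeta (t : ℝ) : ℝ≥0∞ := (ENNReal.ofReal (1 - t))⁻¹ - 1

lemma continuous_zeta : Continuous zeta := by
  unfold zeta
  exact (ENNReal.continuous_sub_right 1).comp
    ((ENNReal.continuous_ofReal.comp (continuous_const.sub continuous_id)).inv)

lemma zeta_of_nonpos {t : ℝ} (ht : t ≤ 0) : zeta t = 0 := by
  unfold zeta
  rw [tsub_eq_zero_iff_le, ENNReal.inv_le_one]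
  rw [ENNReal.one_le_ofReal]
  linarith

lemma zeta_of_one_le {t : ℝ} (ht : 1 ≤ t) : zeta t = ⊤ := by
  unfold zeta
  rw [ENNReal.ofReal_eq_zero.mpr (by linarith), ENNReal.inv_zero]
  simp

noncomputable def xi (t : ℝ) : EReal := ENNReal.log (zeta t)

lemma continuous_xi : Continuous xi := ENNReal.continuous_log.comp continuous_zeta

lemma xi_of_nonpos {t : ℝ} (ht : t ≤ 0) : xi t = ⊥ := by
  unfold xi; rw [zeta_of_nonpos ht, ENNReal.log_zero]

lemma xi_of_one_le {t : ℝ} (ht : 1 ≤ t) : xi t = ⊤ := by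
  unfold xi; rw [zeta_of_one_le ht, ENNReal.log_top]



/-! ### A separating family of bounded continuous functions on `EReal` -/

noncomputable def clampQ (p : ℚ × ℚ) (a : EReal) : ℝ :=
  (min (max a ((p.1 : ℝ) : EReal)) (max ((p.1 : ℝ) : EReal) ((p.2 : ℝ) : EReal))).toReal

lemma continuous_clampQ (p : ℚ × ℚ) : Continuous (clampQ p) := by
  apply EReal.continuousOn_toReal.comp_continuous
    ((continuous_id.max continuous_const).min continuous_const)
  intro a
  have h1 : ((p.1 : ℝ) : EReal) ≤ min (max a ((p.1 : ℝ) : EReal)) (max ((p.1 : ℝ) : EReal) ((p.2 : ℝ) : EReal)) :=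
    le_min (le_max_right _ _) (le_max_left _ _)
  have h2 : min (max a ((p.1 : ℝ) : EReal)) (max ((p.1 : ℝ) : EReal) ((p.2 : ℝ) : EReal))
      ≤ max ((p.1 : ℝ) : EReal) ((p.2 : ℝ) : EReal) := min_le_right _ _
  simp only [Set.mem_compl_iff, Set.mem_insert_iff, Set.mem_singleton_iff, not_or]
  constructor
  · exact ne_of_gt (lt_of_lt_of_le (EReal.bot_lt_coe _) h1)
  · exact ne_of_lt (lt_of_le_of_lt h2 (max_lt (EReal.coe_lt_top _) (EReal.coe_lt_top _)))

lemma clampQ_ne {p : ℚ × ℚ} {a b : EReal} (h1 : a < ((p.1 : ℝ) : EReal))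
    (h2 : ((p.1 : ℝ) : EReal) < ((p.2 : ℝ) : EReal)) (h3 : ((p.2 : ℝ) : EReal) < b) :
    clampQ p a ≠ clampQ p b := by
  have ha : clampQ p a = (p.1 : ℝ) := by
    unfold clampQ
    rw [max_eq_right h1.le, min_eq_left (le_max_left _ _), EReal.toReal_coe]
  have hb : clampQ p b = (p.2 : ℝ) := by
    unfold clampQ
    rw [max_eq_left (h2.trans h3).le, max_eq_right h2.le, min_eq_right h3.le,
      EReal.toReal_coe]
  rw [ha, hb]
  have : (p.1 : ℝ) ≠ (p.2 : ℝ) := ne_of_lt (by exact_mod_cast h2)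
  exact this


/-! ### A separating pseudo-distance on `EReal` -/

noncomputable def qp : ℕ → ℚ × ℚ := fun n => (Denumerable.eqv (ℚ × ℚ)).symm n

lemma qp_surjective : Function.Surjective qp := (Denumerable.eqv (ℚ × ℚ)).symm.surjective

noncomputable def ed (a b : EReal) : ℝ :=
  ∑' m : ℕ, (1 / 2 : ℝ) ^ m * min 1 |clampQ (qp m) a - clampQ (qp m) b|

lemma ed_term_nonneg (a b : EReal) (m : ℕ) :
    0 ≤ (1 / 2 : ℝ) ^ m * min 1 |clampQ (qp m) a - clampQ (qp m) b| :=
  mul_nonneg (by positivity) (le_min zero_le_one (abs_nonneg _))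

lemma ed_term_le (a b : EReal) (m : ℕ) :
    (1 / 2 : ℝ) ^ m * min 1 |clampQ (qp m) a - clampQ (qp m) b| ≤ (1 / 2 : ℝ) ^ m := by
  nth_rewrite 2 [← mul_one ((1 / 2 : ℝ) ^ m)]
  exact mul_le_mul_of_nonneg_left (min_le_left _ _) (by positivity)

lemma ed_summable (a b : EReal) :
    Summable fun m : ℕ => (1 / 2 : ℝ) ^ m * min 1 |clampQ (qp m) a - clampQ (qp m) b| :=
  Summable.of_nonneg_of_le (ed_term_nonneg a b) (ed_term_le a b) summable_geometric_two

lemma ed_nonneg (a b : EReal) : 0 ≤ ed a b := tsum_nonneg (ed_term_nonneg a b)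

lemma ed_self (a : EReal) : ed a a = by exact 0 := by
  unfold ed; simp

lemma ed_eq_zero_iff {a b : EReal} : ed a b = 0 ↔ a = b := by
  constructor
  · intro h
    have hterm : ∀ m, (1 / 2 : ℝ) ^ m * min 1 |clampQ (qp m) a - clampQ (qp m) b| = 0 := by
      intro m
      refine le_antisymm ?_ (ed_term_nonneg a b m)
      have h2 := Summable.le_tsum (ed_summable a b) m (fun j _ => ed_term_nonneg a b j)
      unfold ed at h
      rw [h] at h2
      exact h2
    have hclamp : ∀ m, clampQ (qp m) a = clampQ (qp m) b := by
      intro m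
      have h0 := hterm m
      have hpow : (0 : ℝ) < (1 / 2 : ℝ) ^ m := by positivity
      have hmin : min 1 |clampQ (qp m) a - clampQ (qp m) b| = 0 := by
        rcases mul_eq_zero.mp h0 with h' | h'
        · exact absurd h' hpow.ne'
        · exact h'
      rcases min_cases (1 : ℝ) |clampQ (qp m) a - clampQ (qp m) b| with ⟨he, _⟩ | ⟨he, _⟩
      · rw [he] at hmin; norm_num at hmin
      · rw [he] at hmin
        exact sub_eq_zero.mp (abs_eq_zero.mp hmin)
    by_contra hab
    rcases lt_or_gt_of_ne hab with hlt | hlt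
    · obtain ⟨q, hq1, hq2⟩ := EReal.exists_rat_btwn_of_lt hlt
      obtain ⟨q', hq'1, hq'2⟩ := EReal.exists_rat_btwn_of_lt hq2
      obtain ⟨m, hm⟩ := qp_surjective (q, q')
      exact clampQ_ne (p := (q, q')) hq1 hq'1 hq'2 (by rw [← hm] at *; exact hclamp m)
    · obtain ⟨q, hq1, hq2⟩ := EReal.exists_rat_btwn_of_lt hlt
      obtain ⟨q', hq'1, hq'2⟩ := EReal.exists_rat_btwn_of_lt hq2
      obtain ⟨m, hm⟩ := qp_surjective (q, q')
      exact clampQ_ne (p := (q, q')) hq1 hq'1 hq'2 (by rw [← hm] at *; exact (hclamp m).symm)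
  · rintro rfl
    unfold ed; simp

lemma continuous_ed : Continuous fun p : EReal × EReal => ed p.1 p.2 := by
  apply continuous_tsum (u := fun m : ℕ => (1 / 2 : ℝ) ^ m)
  · intro m
    exact continuous_const.mul (continuous_const.min
      (((continuous_clampQ (qp m)).comp continuous_fst).sub
        ((continuous_clampQ (qp m)).comp continuous_snd)).abs)
  · exact summable_geometric_two
  · intro m p
    rw [Real.norm_eq_abs, abs_of_nonneg (ed_term_nonneg p.1 p.2 m)]
    exact ed_term_le p.1 p.2 m

/-! ### Stabilization detector -/

variable {X : Type*} [TopologicalSpace X]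

noncomputable def stab (u : ℕ → X → EReal) (k : ℕ) (x : X) : ℝ :=
  ∑' j : ℕ, (1 / 2 : ℝ) ^ j * min 1 (ed (u (k + j) x) (u k x))

lemma stab_term_nonneg (u : ℕ → X → EReal) (k : ℕ) (x : X) (j : ℕ) :
    0 ≤ (1 / 2 : ℝ) ^ j * min 1 (ed (u (k + j) x) (u k x)) :=
  mul_nonneg (by positivity) (le_min zero_le_one (ed_nonneg _ _))

lemma stab_term_le (u : ℕ → X → EReal) (k : ℕ) (x : X) (j : ℕ) :
    (1 / 2 : ℝ) ^ j * min 1 (ed (u (k + j) x) (u k x)) ≤ (1 / 2 : ℝ) ^ j := by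
  nth_rewrite 2 [← mul_one ((1 / 2 : ℝ) ^ j)]
  exact mul_le_mul_of_nonneg_left (min_le_left _ _) (by positivity)

lemma stab_summable (u : ℕ → X → EReal) (k : ℕ) (x : X) :
    Summable fun j : ℕ => (1 / 2 : ℝ) ^ j * min 1 (ed (u (k + j) x) (u k x)) :=
  Summable.of_nonneg_of_le (stab_term_nonneg u k x) (stab_term_le u k x) summable_geometric_two

lemma stab_nonneg (u : ℕ → X → EReal) (k : ℕ) (x : X) : 0 ≤ stab u k x :=
  tsum_nonneg (stab_term_nonneg u k x)

lemma continuous_stab (u : ℕ → X → EReal) (hu : ∀ n, Continuous (u n)) (k : ℕ) :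
    Continuous (stab u k) := by
  apply continuous_tsum (u := fun j : ℕ => (1 / 2 : ℝ) ^ j)
  · intro j
    exact continuous_const.mul (continuous_const.min
      (continuous_ed.comp ((hu (k + j)).prodMk (hu k))))
  · exact summable_geometric_two
  · intro j x
    rw [Real.norm_eq_abs, abs_of_nonneg (stab_term_nonneg u k x j)]
    exact stab_term_le u k x j

lemma stab_eq_zero_iff {u : ℕ → X → EReal} {k : ℕ} {x : X} :
    stab u k x = 0 ↔ ∀ j, u (k + j) x = u k x := by
  constructor
  · intro h j
    have h2 := Summable.le_tsum (stab_summable u k x) j (fun i _ => stab_term_nonneg u k x i)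
    unfold stab at h
    rw [h] at h2
    have h0 := le_antisymm h2 (stab_term_nonneg u k x j)
    have hpow : (0 : ℝ) < (1 / 2 : ℝ) ^ j := by positivity
    have hmin : min 1 (ed (u (k + j) x) (u k x)) = 0 := by
      rcases mul_eq_zero.mp h0 with h' | h'
      · exact absurd h' hpow.ne'
      · exact h'
    rcases min_cases (1 : ℝ) (ed (u (k + j) x) (u k x)) with ⟨he, _⟩ | ⟨he, _⟩
    · rw [he] at hmin; norm_num at hmin
    · rw [he] at hmin
      exact ed_eq_zero_iff.mp hmin
  · intro h
    unfold stab
    have : ∀ j : ℕ, (1 / 2 : ℝ) ^ j * min 1 (ed (u (k + j) x) (u k x)) = 0 := by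
      intro j
      rw [h j, ed_eq_zero_iff.mpr rfl]
      simp
    rw [tsum_congr this]
    simp

/-! ### Finite partial minima / maxima -/

noncomputable def pMin (A : ℕ → X → EReal) : ℕ → X → EReal
  | 0 => A 0
  | n + 1 => fun x => min (pMin A n x) (A (n + 1) x)

noncomputable def pMax (A : ℕ → X → EReal) : ℕ → X → EReal
  | 0 => A 0
  | n + 1 => fun x => max (pMax A n x) (A (n + 1) x)

lemma pMin_continuous (A : ℕ → X → EReal) (hA : ∀ n, Continuous (A n)) :
    ∀ n, Continuous (pMin A n)
  | 0 => hA 0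
  | n + 1 => (pMin_continuous A hA n).min (hA (n + 1))

lemma pMax_continuous (A : ℕ → X → EReal) (hA : ∀ n, Continuous (A n)) :
    ∀ n, Continuous (pMax A n)
  | 0 => hA 0
  | n + 1 => (pMax_continuous A hA n).max (hA (n + 1))

lemma pMin_le (A : ℕ → X → EReal) {n j : ℕ} (hj : j ≤ n) (x : X) : pMin A n x ≤ A j x := by
  induction n with
  | zero => rw [Nat.le_zero.mp hj]; exact le_rfl
  | succ n ih =>
    rcases Nat.le_succ_iff.mp hj with hj' | hj'
    · rcases Nat.lt_succ_iff_lt_or_eq.mp (Nat.lt_succ_of_le hj') with _ | _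
      all_goals {
        rcases Nat.le_succ_iff.mp hj with h | h
        · exact (min_le_left _ _).trans (ih h)
        · rw [h]; exact min_le_right _ _ }
    · rw [hj']; exact min_le_right _ _

lemma le_pMax (A : ℕ → X → EReal) {n j : ℕ} (hj : j ≤ n) (x : X) : A j x ≤ pMax A n x := by
  induction n with
  | zero => rw [Nat.le_zero.mp hj]; exact le_rfl
  | succ n ih =>
    rcases Nat.le_succ_iff.mp hj with hj' | hj'
    · exact (ih hj').trans (le_max_left _ _)
    · rw [hj']; exact le_max_right _ _

lemma iInf_le_pMin (A : ℕ → X → EReal) (n : ℕ) (x : X) : (⨅ k, A k x) ≤ pMin A n x := by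
  induction n with
  | zero => exact iInf_le _ 0
  | succ n ih => exact le_min ih (iInf_le _ (n + 1))

lemma pMax_le_iSup (A : ℕ → X → EReal) (n : ℕ) (x : X) : pMax A n x ≤ ⨆ k, A k x := by
  induction n with
  | zero => exact le_iSup (fun k => A k x) 0
  | succ n ih => exact max_le ih (le_iSup (fun k => A k x) (n + 1))

lemma pMax_le (A : ℕ → X → EReal) {n : ℕ} {c : EReal} {x : X} (h : ∀ j, j ≤ n → A j x ≤ c) :
    pMax A n x ≤ c := by
  induction n with
  | zero => exact h 0 le_rfl
  | succ n ih => exact max_le (ih fun j hj => h j (hj.trans (Nat.le_succ n))) (h (n+1) le_rfl)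

lemma pMax_mono (A : ℕ → X → EReal) {n m : ℕ} (h : n ≤ m) (x : X) :
    pMax A n x ≤ pMax A m x := by
  induction m with
  | zero => rw [Nat.le_zero.mp h]
  | succ m ih =>
    rcases Nat.le_succ_iff.mp h with h' | h'
    · exact (ih h').trans (le_max_left _ _)
    · rw [h']

lemma pMin_eq_iInf {A : ℕ → X → EReal} {n : ℕ} {x : X} (htop : ∀ j, n < j → A j x = ⊤) :
    pMin A n x = ⨅ j, A j x := by
  refine le_antisymm (le_iInf fun j => ?_) (iInf_le_pMin A n x)
  rcases le_or_gt j n with hj | hj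
  · exact pMin_le A hj x
  · rw [htop j hj]; exact le_top

lemma pMax_eq_iSup {A : ℕ → X → EReal} {n : ℕ} {x : X} (hbot : ∀ j, n < j → A j x = ⊥) :
    pMax A n x = ⨆ j, A j x := by
  refine le_antisymm (pMax_le_iSup A n x) (iSup_le fun j => ?_)
  rcases le_or_gt j n with hj | hj
  · exact le_pMax A hj x
  · rw [hbot j hj]; exact bot_le

/-! ### Continuity of pointwise infima with continuous witnesses -/

lemma continuous_iInf_of_witness {A : ℕ → X → EReal} (hA : ∀ n, Continuous (A n))
    (hw : ∀ x, ∃ φ : X → EReal, Continuous φ ∧ φ x = (⨅ n, A n x) ∧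
      ∀ᶠ y in 𝓝 x, φ y ≤ ⨅ n, A n y) :
    Continuous fun x => ⨅ n, A n x := by
  rw [continuous_iff_continuousAt]
  intro x
  obtain ⟨φ, hφc, hφx, hφle⟩ := hw x
  unfold ContinuousAt
  rw [tendsto_order]
  constructor
  · intro b hb
    have h1 : ∀ᶠ y in 𝓝 x, b < φ y :=
      hφc.continuousAt.eventually (eventually_gt_nhds (by rw [hφx]; exact hb))
    filter_upwards [h1, hφle] with y hy1 hy2
    exact lt_of_lt_of_le hy1 hy2
  · intro b hb
    obtain ⟨n, hn⟩ := iInf_lt_iff.mp hb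
    have h1 : ∀ᶠ y in 𝓝 x, A n y < b :=
      (hA n).continuousAt.eventually (eventually_lt_nhds hn)
    filter_upwards [h1] with y hy
    exact lt_of_le_of_lt (iInf_le _ n) hy

lemma continuous_iSup_of_witness {A : ℕ → X → EReal} (hA : ∀ n, Continuous (A n))
    (hw : ∀ x, ∃ φ : X → EReal, Continuous φ ∧ φ x = (⨆ n, A n x) ∧
      ∀ᶠ y in 𝓝 x, (⨆ n, A n y) ≤ φ y) :
    Continuous fun x => ⨆ n, A n x := by
  rw [continuous_iff_continuousAt]
  intro x
  obtain ⟨φ, hφc, hφx, hφle⟩ := hw x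
  unfold ContinuousAt
  rw [tendsto_order]
  constructor
  · intro b hb
    obtain ⟨n, hn⟩ := lt_iSup_iff.mp hb
    have h1 : ∀ᶠ y in 𝓝 x, b < A n y :=
      (hA n).continuousAt.eventually (eventually_gt_nhds hn)
    filter_upwards [h1] with y hy
    exact lt_of_lt_of_le hy (le_iSup (fun k => A k y) n)
  · intro b hb
    have h1 : ∀ᶠ y in 𝓝 x, φ y < b :=
      hφc.continuousAt.eventually (eventually_lt_nhds (by rw [hφx]; exact hb))
    filter_upwards [h1, hφle] with y hy1 hy2
    exact lt_of_le_of_lt hy2 hy1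

/-! ### Lattice computations in `EReal` -/

lemma iInf_max_eq (c : EReal) (B : ℕ → EReal) :
    (⨅ n, max c (B n)) = max c (⨅ n, B n) := by
  have hge : max c (⨅ n, B n) ≤ ⨅ n, max c (B n) :=
    le_iInf fun n => max_le_max le_rfl (iInf_le _ n)
  rcases le_total (⨅ n, B n) c with hle | hle
  · rw [max_eq_left hle]
    refine le_antisymm ?_ (le_iInf fun n => le_max_left _ _)
    by_contra hlt
    push_neg at hlt
    have h1 : ∀ n, c < B n := by
      intro n
      have h2 := lt_of_lt_of_le hlt (iInf_le _ n)
      rcases max_cases c (B n) with ⟨he, _⟩ | ⟨_, h3⟩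
      · rw [he] at h2; exact absurd h2 (lt_irrefl _)
      · exact h3
    have h3 : (⨅ n, max c (B n)) ≤ ⨅ n, B n :=
      le_iInf fun n => (iInf_le _ n).trans (max_le (h1 n).le le_rfl)
    exact absurd ((hlt.trans_le h3).trans_le hle) (lt_irrefl _)
  · rw [max_eq_right hle]
    refine le_antisymm (le_iInf fun n => ?_) ?_
    · exact (iInf_le (fun n => max c (B n)) n).trans (max_le (hle.trans (iInf_le _ n)) le_rfl)
    · calc (⨅ n, B n) = max c (⨅ n, B n) := (max_eq_right hle).symm
        _ ≤ ⨅ n, max c (B n) := hge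

lemma iSup_min_eq (c : EReal) (B : ℕ → EReal) :
    (⨆ n, min c (B n)) = min c (⨆ n, B n) := by
  have hge : (⨆ n, min c (B n)) ≤ min c (⨆ n, B n) :=
    iSup_le fun n => min_le_min le_rfl (le_iSup _ n)
  rcases le_total c (⨆ n, B n) with hle | hle
  · rw [min_eq_left hle]
    refine le_antisymm (iSup_le fun n => min_le_left _ _) ?_
    by_contra hlt
    push_neg at hlt
    have h1 : ∀ n, B n < c := by
      intro n
      have h2 := lt_of_le_of_lt (le_iSup (fun n => min c (B n)) n) hlt
      rcases min_cases c (B n) with ⟨he, _⟩ | ⟨_, h3⟩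
      · rw [he] at h2; exact absurd h2 (lt_irrefl _)
      · exact h3
    have h3 : (⨆ n, B n) ≤ ⨆ n, min c (B n) :=
      iSup_le fun n => le_trans (le_min (h1 n).le le_rfl) (le_iSup (fun n => min c (B n)) n)
    exact absurd (hle.trans_lt (lt_of_le_of_lt h3 hlt)) (lt_irrefl _)
  · rw [min_eq_right hle]
    refine le_antisymm (iSup_le fun n => ?_) (iSup_le fun n => ?_)
    · exact (min_le_right _ _).trans (le_iSup (fun n => B n) n)
    · exact le_trans (le_min ((le_iSup (fun n => B n) n).trans hle) le_rfl)
        (le_iSup (fun n => min c (B n)) n)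

lemma neg_iSup_eq (B : ℕ → EReal) : (-(⨆ n, B n)) = ⨅ n, -(B n) := by
  refine le_antisymm (le_iInf fun n => EReal.neg_le_neg_iff.mpr (le_iSup _ n)) ?_
  have h2 : (⨆ n, B n) ≤ -(⨅ n, -(B n)) :=
    iSup_le fun n => EReal.le_neg_of_le_neg (iInf_le (fun n => -(B n)) n)
  have h3 := EReal.neg_le_neg_iff.mpr h2
  rwa [neg_neg] at h3

/-! ### The one-sided approximation lemma -/

lemma one_sided (g : X → EReal) (u gs : ℕ → X → EReal)
    (hu : ∀ n, Continuous (u n)) (hgs : ∀ n, Continuous (gs n))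
    (hstab : ∀ x, ∃ n, ∀ k, n ≤ k → u k x = g x)
    (hinf : ∀ x, g x = ⨅ n, gs n x) :
    ∃ w : ℕ → X → EReal, (∀ k, Continuous (w k)) ∧ (∀ k x, g x ≤ w k x) ∧
      ∀ x, ∃ N, ∀ k, N ≤ k → w k x = g x := by
  classical
  set A : ℕ → ℕ → X → EReal :=
    fun k n x => max (max (u k x) (gs n x)) (xi ((n : ℝ) * stab u k x)) with hA
  have hAc : ∀ k n, Continuous (A k n) := fun k n =>
    ((hu k).max (hgs n)).max (continuous_xi.comp (continuous_const.mul (continuous_stab u hu k)))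
  have hAgeu : ∀ k n x, u k x ≤ A k n x := fun k n x => (le_max_left _ _).trans (le_max_left _ _)
  have hAge : ∀ k n x, g x ≤ A k n x := fun k n x => by
    calc g x = ⨅ m, gs m x := hinf x
      _ ≤ gs n x := iInf_le _ n
      _ ≤ A k n x := (le_max_right _ _).trans (le_max_left _ _)
  have hD : ∀ k x, stab u k x = 0 → u k x = g x := by
    intro k x h0
    obtain ⟨n₀, hn₀⟩ := hstab x
    have h1 := stab_eq_zero_iff.mp h0 n₀
    rw [← h1]
    exact hn₀ _ (Nat.le_add_left _ _)
  have hwD : ∀ k x, stab u k x = 0 → (⨅ n, A k n x) = g x := by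
    intro k x h0
    have hu0 : u k x = g x := hD k x h0
    have h1 : ∀ n, A k n x = max (g x) (gs n x) := by
      intro n
      simp only [hA]
      rw [h0, mul_zero, xi_of_nonpos le_rfl, hu0]
      exact max_eq_left bot_le
    rw [iInf_congr h1, iInf_max_eq, ← hinf x, max_self]
  have hwstab : ∀ x, ∃ N, ∀ k, N ≤ k → (⨅ n, A k n x) = g x := by
    intro x
    obtain ⟨n₀, hn₀⟩ := hstab x
    refine ⟨n₀, fun k hk => hwD k x ?_⟩
    rw [stab_eq_zero_iff]
    intro j
    rw [hn₀ (k + j) (hk.trans (Nat.le_add_right _ _)), hn₀ k hk]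
  have hwc : ∀ k, Continuous fun x => ⨅ n, A k n x := by
    intro k
    apply continuous_iInf_of_witness (hAc k)
    intro x
    by_cases h0 : stab u k x = 0
    · refine ⟨u k, hu k, ?_, Filter.Eventually.of_forall fun y => le_iInf fun n => hAgeu k n y⟩
      rw [hwD k x h0, hD k x h0]
    · have hpos : 0 < stab u k x := lt_of_le_of_ne (stab_nonneg u k x) (Ne.symm h0)
      set c := stab u k x with hc
      set N : ℕ := ⌈2 / c⌉₊ with hN
      have hU : ∀ y, c / 2 < stab u k y → (⨅ n, A k n y) = pMin (A k) N y := by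
        intro y hy
        refine (pMin_eq_iInf fun j hj => ?_).symm
        have hxi : xi ((j : ℝ) * stab u k y) = ⊤ := by
          apply xi_of_one_le
          have h2 : (2 / c) ≤ (j : ℝ) :=
            le_trans (Nat.le_ceil _) (by exact_mod_cast (Nat.le_of_lt hj))
          have hy2 : (0 : ℝ) ≤ stab u k y := stab_nonneg u k y
          calc (1 : ℝ) = (2 / c) * (c / 2) := by field_simp
            _ ≤ (j : ℝ) * (c / 2) := mul_le_mul_of_nonneg_right h2 (by positivity)
            _ ≤ (j : ℝ) * stab u k y :=
                mul_le_mul_of_nonneg_left hy.le (by positivity)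
        simp only [hA]
        rw [hxi]
        exact max_eq_right le_top
      have hUopen : IsOpen {y | c / 2 < stab u k y} :=
        isOpen_lt continuous_const (continuous_stab u hu k)
      have hxU : x ∈ {y | c / 2 < stab u k y} := by
        simp only [Set.mem_setOf_eq, ← hc]
        linarith
      refine ⟨pMin (A k) N, pMin_continuous _ (hAc k) N, (hU x hxU).symm, ?_⟩
      exact Filter.eventually_of_mem (hUopen.mem_nhds hxU) fun y hy => (hU y hy).ge
  exact ⟨fun k x => ⨅ n, A k n x, hwc, fun k x => le_iInf fun n => hAge k n x, hwstab⟩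

lemma one_sided_sup (h : X → EReal) (v hs : ℕ → X → EReal)
    (hv : ∀ n, Continuous (v n)) (hhs : ∀ n, Continuous (hs n))
    (hstab : ∀ x, ∃ n, ∀ k, n ≤ k → v k x = h x)
    (hsup : ∀ x, h x = ⨆ n, hs n x) :
    ∃ w : ℕ → X → EReal, (∀ k, Continuous (w k)) ∧ (∀ k x, w k x ≤ h x) ∧
      ∀ x, ∃ N, ∀ k, N ≤ k → w k x = h x := by
  obtain ⟨w, hwc, hwge, hwstab⟩ := one_sided (fun x => -(h x)) (fun k x => -(v k x))
    (fun n x => -(hs n x)) (fun n => (hv n).neg) (fun n => (hhs n).neg)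
    (fun x => by
      obtain ⟨n, hn⟩ := hstab x
      exact ⟨n, fun k hk => by rw [hn k hk]⟩)
    (fun x => by rw [hsup x]; exact neg_iSup_eq (fun n => hs n x))
  refine ⟨fun k x => -(w k x), fun k => (hwc k).neg, fun k x => ?_, fun x => ?_⟩
  · have h2 := EReal.neg_le_neg_iff.mpr (hwge k x)
    rwa [neg_neg] at h2
  · obtain ⟨N, hN⟩ := hwstab x
    exact ⟨N, fun k hk => by dsimp only; rw [hN k hk, neg_neg]⟩

end Stmt4Aux

open Stmt4Aux



/-- A function is of the *first stable Baire class* if it is the stable (i.e. pointwise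
eventually constant) limit of a sequence of continuous functions. -/
def FirstStableBaireClass {X Y : Type*} [TopologicalSpace X] [TopologicalSpace Y]
    (f : X → Y) : Prop :=
  ∃ u : ℕ → X → Y, (∀ n, Continuous (u n)) ∧ ∀ x, ∃ n, ∀ k, n ≤ k → u k x = f x

theorem stmt4 {X : Type*} [TopologicalSpace X] (g h : X → EReal)
    (hc : CountablePairOfHahn g h) (hg : FirstStableBaireClass g)
    (hh : FirstStableBaireClass h) :
    StablePairOfHahn g h := by
  classical
  obtain ⟨gs, hs, hgsc, hhsc, hgh⟩ := hc
  obtain ⟨u, huc, hustab⟩ := hg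
  obtain ⟨v, hvc, hvstab⟩ := hh
  obtain ⟨w, hwc, hwge, hwstab⟩ := one_sided g u gs huc hgsc hustab (fun x => (hgh x).1)
  obtain ⟨w', hw'c, hw'le, hw'stab⟩ :=
    one_sided_sup h v hs hvc hhsc hvstab (fun x => (hgh x).2.1)
  have hglh : ∀ x, g x ≤ h x := fun x => (hgh x).2.2
  set W : ℕ → X → EReal := pMax w' with hW
  have hWc : ∀ k, Continuous (W k) := pMax_continuous w' hw'c
  have hWle : ∀ k x, W k x ≤ h x := fun k x => pMax_le w' (fun j _ => hw'le j x)
  have hWstab : ∀ x, ∃ N, ∀ k, N ≤ k → W k x = h x := by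
    intro x
    obtain ⟨N, hN⟩ := hw'stab x
    refine ⟨N, fun k hk => le_antisymm (hWle k x) ?_⟩
    rw [← hN k hk]
    exact le_pMax w' le_rfl x
  set a : ℕ → X → EReal := fun k x => max (w k x) (W k x) with ha
  have hac : ∀ k, Continuous (a k) := fun k => (hwc k).max (hWc k)
  have hKey : ∀ x, ∃ K, (∀ k, K ≤ k → w k x = g x) ∧ (∀ k, K ≤ k → W k x = h x) := by
    intro x
    obtain ⟨N1, h1⟩ := hwstab x
    obtain ⟨N2, h2⟩ := hWstab x
    exact ⟨max N1 N2, fun k hk => h1 k (le_trans (le_max_left _ _) hk),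
      fun k hk => h2 k (le_trans (le_max_right _ _) hk)⟩
  have haKey : ∀ x K, (∀ k, K ≤ k → w k x = g x) → (∀ k, K ≤ k → W k x = h x) →
      ∀ k, K ≤ k → a k x = h x := by
    intro x K hKw hKW k hk
    simp only [ha]
    rw [hKw k hk, hKW k hk]
    exact max_eq_right (hglh x)
  have hqg : ∀ x, g x ≤ ⨅ k, a k x :=
    fun x => le_iInf fun k => (hwge k x).trans (le_max_left _ _)
  have hqK : ∀ x K, (∀ k, K ≤ k → a k x = h x) → (⨅ k, a k x) = pMin a K x := by
    intro x K hK
    refine le_antisymm (iInf_le_pMin a K x) (le_iInf fun k => ?_)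
    rcases le_or_gt k K with hk | hk
    · exact pMin_le a hk x
    · rw [hK k hk.le, ← hK K le_rfl]
      exact pMin_le a le_rfl x
  have hqh : ∀ x, (⨅ k, a k x) ≤ h x := by
    intro x
    obtain ⟨K, hKw, hKW⟩ := hKey x
    calc (⨅ k, a k x) ≤ a K x := iInf_le _ K
      _ = h x := haKey x K hKw hKW K le_rfl
  have hqc : Continuous fun x => ⨅ k, a k x := by
    apply continuous_iInf_of_witness hac
    intro x
    obtain ⟨K, hKw, hKW⟩ := hKey x
    have hKa := haKey x K hKw hKW
    refine ⟨fun y => min (pMin a K y) (W K y),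
      (pMin_continuous a hac K).min (hWc K), ?_,
      Filter.Eventually.of_forall fun y => le_iInf fun k => ?_⟩
    · show min (pMin a K x) (W K x) = ⨅ n, a n x
      rw [hqK x K hKa]
      refine min_eq_left ?_
      rw [← hqK x K hKa]
      calc (⨅ k, a k x) ≤ a K x := iInf_le _ K
        _ = h x := hKa K le_rfl
        _ = W K x := (hKW K le_rfl).symm
    · rcases le_or_gt k K with hk | hk
      · exact (min_le_left _ _).trans (pMin_le a hk y)
      · refine (min_le_right _ _).trans ?_
        calc W K y ≤ W k y := pMax_mono w' hk.le y
          _ ≤ a k y := le_max_right _ _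
  refine ⟨fun n => if n % 2 = 0 then (fun x => min (w (n / 2) x) (⨅ k, a k x))
    else (fun x => max (W (n / 2) x) (⨅ k, a k x)), ?_, ?_⟩
  · intro n
    by_cases hn : n % 2 = 0
    · simp only [if_pos hn]
      exact (hwc _).min hqc
    · simp only [if_neg hn]
      exact (hWc _).max hqc
  · intro x
    obtain ⟨N1, h1⟩ := hwstab x
    obtain ⟨N2, h2⟩ := hWstab x
    constructor
    · constructor
      · refine ⟨2 * N1, ?_⟩
        have e1 : (2 * N1) % 2 = 0 := by omega
        have e2 : (2 * N1) / 2 = N1 := by omega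
        simp only [if_pos e1, e2]
        rw [h1 N1 le_rfl]
        exact min_eq_left (hqg x)
      · rintro b ⟨n, rfl⟩
        dsimp only
        split_ifs
        · exact le_min (hwge _ x) (hqg x)
        · exact (hqg x).trans (le_max_right _ _)
    · constructor
      · refine ⟨2 * N2 + 1, ?_⟩
        have e1 : ¬((2 * N2 + 1) % 2 = 0) := by omega
        have e2 : (2 * N2 + 1) / 2 = N2 := by omega
        simp only [if_neg e1, e2]
        rw [h2 N2 le_rfl]
        exact max_eq_left (hqh x)
      · rintro b ⟨n, rfl⟩
        dsimp only
        split_ifs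
        · exact (min_le_right _ _).trans (hqh x)
        · exact max_le (hWle _ x) (hqh x)
end

section
/- Let αT = T ∪ {∞} be the Alexandroff (one-point) compactification of a discrete space T, and let f : αT → ℝ be a Baire one function. Then there exists a countable set S ⊆ T such that f is constant on αT \ S. -/
/-- A real-valued function is *Baire one* if it is the pointwise limit of a sequence
of continuous functions. -/
def BaireOne {X : Type*} [TopologicalSpace X] (f : X → ℝ) : Prop :=
  ∃ u : ℕ → X → ℝ, (∀ n, Continuous (u n)) ∧
    ∀ x, Filter.Tendsto (fun n => u n x) Filter.atTop (nhds (f x))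

open Filter OnePoint Topology

lemma countable_ne_of_continuous {T : Type*} [TopologicalSpace T] [DiscreteTopology T]
    (g : OnePoint T → ℝ) (hg : Continuous g) :
    {t : T | g t ≠ g OnePoint.infty}.Countable := by
  have htend : Tendsto (fun t : T => g t) cofinite (𝓝 (g OnePoint.infty)) := by
    have h1 : Tendsto ((↑) : T → OnePoint T) cofinite (𝓝 (∞ : OnePoint T)) := by
      rw [← cocompact_eq_cofinite T, ← coclosedCompact_eq_cocompact]
      exact OnePoint.tendsto_coe_infty
    exact (hg.tendsto _).comp h1
  have key : ∀ n : ℕ, {t : T | (1 : ℝ)/(n+1) ≤ |g t - g OnePoint.infty|}.Finite := by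
    intro n
    have hpos : (0 : ℝ) < 1/(n+1) := by positivity
    have := htend (Metric.ball_mem_nhds (g OnePoint.infty) hpos)
    rw [mem_map, mem_cofinite] at this
    refine this.subset ?_
    intro t ht hmem
    simp only [Set.mem_preimage, Metric.mem_ball, Real.dist_eq] at hmem
    exact absurd (lt_of_le_of_lt ht hmem) (lt_irrefl _)
  have hunion : {t : T | g t ≠ g OnePoint.infty} =
      ⋃ n : ℕ, {t : T | (1 : ℝ)/(n+1) ≤ |g t - g OnePoint.infty|} := by
    ext t
    simp only [Set.mem_setOf_eq, Set.mem_iUnion]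
    constructor
    · intro h
      have hpos : 0 < |g t - g OnePoint.infty| := abs_pos.mpr (sub_ne_zero.mpr h)
      obtain ⟨n, hn⟩ := exists_nat_one_div_lt hpos
      exact ⟨n, hn.le⟩
    · rintro ⟨n, hn⟩
      intro h
      rw [h, sub_self, abs_zero] at hn
      have : (0 : ℝ) < 1/(n+1) := by positivity
      linarith
  rw [hunion]
  exact Set.countable_iUnion fun n => (key n).countable

theorem stmt6 {T : Type*} [TopologicalSpace T] [DiscreteTopology T]
    (f : OnePoint T → ℝ) (hf : BaireOne f) :
    ∃ S : Set T, S.Countable ∧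
      ∀ x : OnePoint T, x ∉ ((↑·) : T → OnePoint T) '' S → f x = f OnePoint.infty := by
  obtain ⟨u, hu_cont, hu_tend⟩ := hf
  refine ⟨⋃ n, {t : T | u n t ≠ u n OnePoint.infty},
    Set.countable_iUnion fun n => countable_ne_of_continuous (u n) (hu_cont n), ?_⟩
  intro x hx
  cases x with
  | infty => rfl
  | coe t =>
    have ht : ∀ n, u n t = u n OnePoint.infty := by
      intro n
      by_contra h
      exact hx ⟨t, Set.mem_iUnion.mpr ⟨n, h⟩, rfl⟩
    have h1 := hu_tend (OnePoint.some t)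
    have h2 := hu_tend OnePoint.infty
    simp only [ht] at h1
    exact tendsto_nhds_unique h1 h2
end

section
/- Every first countable scattered compact Hausdorff space is countable. -/
open Set Filter Topology

/-- A compact set all of whose points have a countable neighborhood is countable. -/
lemma countable_of_compact_loc {X : Type*} [TopologicalSpace X] {K : Set X} (hK : IsCompact K)
    (h : ∀ x ∈ K, ∃ S ∈ 𝓝 x, S.Countable) : K.Countable := by
  choose! S hS hSc using h
  obtain ⟨t, htK, ht⟩ := hK.elim_nhds_subcover S hS
  exact Set.Countable.mono ht (t.countable_toSet.biUnion fun x hx => hSc x (htK x hx))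

/-- A topological space is *scattered* if every nonempty subset `A` has a point
isolated in `A`. -/
def Scattered (X : Type*) [TopologicalSpace X] : Prop :=
  ∀ A : Set X, A.Nonempty → ∃ a ∈ A, ∃ U : Set X, IsOpen U ∧ U ∩ A = {a}

theorem stmt9 {X : Type*} [TopologicalSpace X] [CompactSpace X] [T2Space X]
    [FirstCountableTopology X] (hX : Scattered X) :
    Countable X := by
  by_contra hc
  rw [← Set.countable_univ_iff] at hc
  -- set of condensation points
  set A : Set X := {x : X | ∀ S ∈ 𝓝 x, ¬ S.Countable} with hA
  have hAne : A.Nonempty := by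
    rcases Set.eq_empty_or_nonempty A with he | hne
    · exfalso
      apply hc
      apply countable_of_compact_loc isCompact_univ
      intro x _
      have : x ∉ A := he ▸ Set.notMem_empty x
      simpa [hA] using this
    · exact hne
  obtain ⟨a, haA, U, hU, hUA⟩ := hX A hAne
  have haU : a ∈ U := by
    have : a ∈ U ∩ A := hUA ▸ rfl
    exact this.1
  -- closed neighborhood inside U
  obtain ⟨C, hCmem, hCcl, hCU⟩ := exists_mem_nhds_isClosed_subset (hU.mem_nhds haU)
  -- countable neighborhood basis at a
  obtain ⟨V, hV⟩ := (𝓝 a).exists_antitone_basis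
  -- intersections of interiors is {a}
  have hInt : ∀ x : X, x ≠ a → ∃ n : ℕ, x ∉ interior (V n) := by
    intro x hx
    have : {x}ᶜ ∈ 𝓝 a := (isOpen_compl_singleton).mem_nhds (by simpa using (Ne.symm hx))
    obtain ⟨n, hn⟩ := hV.mem_iff.mp this
    exact ⟨n, fun hxn => hn (interior_subset hxn) rfl⟩
  -- each piece C \ interior (V n) is compact and countable
  have hKc : ∀ n : ℕ, (C \ interior (V n)).Countable := by
    intro n
    have hcl : IsClosed (C \ interior (V n)) := hCcl.sdiff isOpen_interior
    apply countable_of_compact_loc hcl.isCompact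
    intro x hx
    have hxU : x ∈ U := hCU hx.1
    have hxa : x ≠ a := by
      rintro rfl
      exact hx.2 (mem_interior_iff_mem_nhds.mpr (hV.mem_of_mem trivial))
    have hxA : x ∉ A := by
      intro hxA
      have : x ∈ U ∩ A := ⟨hxU, hxA⟩
      rw [hUA] at this
      exact hxa this
    simp only [hA, Set.mem_setOf_eq, not_forall] at hxA
    obtain ⟨S, hS, hSc⟩ := hxA
    exact ⟨S, hS, not_not.mp hSc⟩
  -- hence C is countable
  have hCc : C.Countable := by
    have hsub : C ⊆ {a} ∪ ⋃ n, (C \ interior (V n)) := by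
      intro x hx
      by_cases hxa : x = a
      · exact Or.inl (by simp [hxa])
      · obtain ⟨n, hn⟩ := hInt x hxa
        exact Or.inr (Set.mem_iUnion.mpr ⟨n, hx, hn⟩)
    exact Set.Countable.mono hsub
      ((Set.countable_singleton a).union (Set.countable_iUnion hKc))
  exact haA C hCmem hCc
end

section
/- Let X be a separable topological space, Y a scattered compact Hausdorff space, and f : X × Y → ℝ̄ a separately continuous function. Then the pair of extremal sections (∧_f, ∨_f) is a stable pair of Hahn on X. -/
lemma scattered_range_countable {Y Z : Type*} [TopologicalSpace Y] [CompactSpace Y] [T2Space Y]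
    [TopologicalSpace Z] [T2Space Z] [SecondCountableTopology Z]
    (hY : Scattered Y) (φ : Y → Z) (hφ : Continuous φ) : (Set.range φ).Countable := by
  have hK : IsClosed (Set.range φ) := (isCompact_range hφ).isClosed
  obtain ⟨V, D, hVc, hD, hKVD⟩ := exists_countable_union_perfect_of_isClosed hK
  rcases D.eq_empty_or_nonempty with hDe | hDne
  · rw [hKVD, hDe, Set.union_empty]; exact hVc
  exfalso
  have hsubD : D ⊆ Set.range φ := hKVD ▸ Set.subset_union_right
  set S : Set (Set Y) := {C | C.Nonempty ∧ IsCompact C ∧ D ⊆ φ '' C} with hS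
  have hC₀ : φ ⁻¹' D ∈ S := by
    refine ⟨?_, (hD.closed.preimage hφ).isCompact, ?_⟩
    · obtain ⟨d, hd⟩ := hDne
      obtain ⟨y, hy⟩ := hsubD hd
      exact ⟨y, by simp [hy, hd]⟩
    · intro d hd
      obtain ⟨y, hy⟩ := hsubD hd
      exact ⟨y, by simp [hy, hd], hy⟩
  have hchain : ∀ c ⊆ S, IsChain (· ⊆ ·) c → c.Nonempty → ∃ lb ∈ S, ∀ s ∈ c, lb ⊆ s := by
    intro c hcS hc hcne
    haveI : Nonempty c := hcne.to_subtype
    have hdir : Directed (· ⊇ ·) (fun C : c => (C : Set Y)) := by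
      intro C C'
      rcases hc.total C.2 C'.2 with h | h
      · exact ⟨C, subset_refl _, h⟩
      · exact ⟨C', h, subset_refl _⟩
    have hne : ∀ C : c, (C : Set Y).Nonempty := fun C => (hcS C.2).1
    have hcomp : ∀ C : c, IsCompact (C : Set Y) := fun C => (hcS C.2).2.1
    have hcl : ∀ C : c, IsClosed (C : Set Y) := fun C => (hcomp C).isClosed
    have hint : (⋂ C : c, (C : Set Y)) = ⋂₀ c := by
      rw [Set.sInter_eq_iInter]
    refine ⟨⋂₀ c, ⟨?_, ?_, ?_⟩, fun s hs => Set.sInter_subset_of_mem hs⟩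
    · rw [← hint]
      exact IsCompact.nonempty_iInter_of_directed_nonempty_isCompact_isClosed _ hdir hne hcomp hcl
    · obtain ⟨C0, hC0⟩ := hcne
      exact (hcomp ⟨C0, hC0⟩).of_isClosed_subset
        (isClosed_sInter fun t ht => hcl ⟨t, ht⟩) (Set.sInter_subset_of_mem hC0)
    · intro d hd
      have hdir' : Directed (· ⊇ ·) (fun C : c => (C : Set Y) ∩ φ ⁻¹' {d}) := by
        intro C C'
        rcases hdir C C' with ⟨C'', h1, h2⟩
        exact ⟨C'', Set.inter_subset_inter_left _ h1, Set.inter_subset_inter_left _ h2⟩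
      have hclpre : IsClosed (φ ⁻¹' {d}) := (isClosed_singleton).preimage hφ
      have hne' : ∀ C : c, ((C : Set Y) ∩ φ ⁻¹' {d}).Nonempty := by
        intro C
        obtain ⟨y, hyC, hyd⟩ := (hcS C.2).2.2 hd
        exact ⟨y, hyC, by simp [hyd]⟩
      have : (⋂ C : c, ((C : Set Y) ∩ φ ⁻¹' {d})).Nonempty :=
        IsCompact.nonempty_iInter_of_directed_nonempty_isCompact_isClosed _ hdir' hne'
          (fun C => (hcomp C).inter_right hclpre) (fun C => (hcl C).inter hclpre)
      obtain ⟨y, hy⟩ := this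
      simp only [Set.mem_iInter, Set.mem_inter_iff, Set.mem_preimage, Set.mem_singleton_iff] at hy
      refine ⟨y, ?_, (hy ⟨_, hcne.some_mem⟩).2⟩
      intro C hC
      exact (hy ⟨C, hC⟩).1
  obtain ⟨M, -, hMmin⟩ := zorn_superset_nonempty S hchain (φ ⁻¹' D) hC₀
  have hMS : M ∈ S := hMmin.1
  obtain ⟨a, haM, U, hU, hUM⟩ := hY M hMS.1
  have haU : a ∈ U := by
    have : a ∈ U ∩ M := by rw [hUM]; rfl
    exact this.1
  set M' := M \ U with hM'def
  have hM'comp : IsCompact M' := hMS.2.1.diff hU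
  have haM' : a ∉ M' := fun h => h.2 haU
  have hnotall : ¬ D ⊆ φ '' M' := by
    intro hsub'
    obtain ⟨d, hd⟩ := hDne
    obtain ⟨y, hyM', _⟩ := hsub' hd
    have hM'S : M' ∈ S := ⟨⟨y, hyM'⟩, hM'comp, hsub'⟩
    have : M ⊆ M' := hMmin.2 hM'S Set.diff_subset
    exact haM' (this haM)
  obtain ⟨d, hd, hdm⟩ := Set.not_subset.mp hnotall
  have hW : IsOpen (φ '' M')ᶜ := (hM'comp.image hφ).isClosed.isOpen_compl
  obtain ⟨y, ⟨hyW, hyD⟩, hyne⟩ := preperfect_iff_nhds.mp hD.acc d hd _ (hW.mem_nhds hdm)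
  -- every point of D not in φ '' M' is φ a
  have hkey : ∀ z ∈ D, z ∉ φ '' M' → z = φ a := by
    intro z hz hznm
    obtain ⟨m, hmM, hmz⟩ := hMS.2.2 hz
    have hmU : m ∈ U := by
      by_contra hmU
      exact hznm ⟨m, ⟨hmM, hmU⟩, hmz⟩
    have : m ∈ ({a} : Set Y) := hUM ▸ ⟨hmU, hmM⟩
    rw [← hmz, this]
  have h1 := hkey y hyD hyW
  have h2 := hkey d hd hdm
  exact hyne (h1.trans h2.symm)

theorem stmt10 {X Y : Type*} [TopologicalSpace X] [TopologicalSpace.SeparableSpace X]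
    [TopologicalSpace Y] [CompactSpace Y] [T2Space Y] [Nonempty Y]
    (hY : Scattered Y)
    (f : X × Y → EReal)
    (hf1 : ∀ x : X, Continuous fun y : Y => f (x, y))
    (hf2 : ∀ y : Y, Continuous fun x : X => f (x, y)) :
    StablePairOfHahn (fun x => ⨅ y : Y, f (x, y)) (fun x => ⨆ y : Y, f (x, y)) := by
  obtain ⟨s, hsc, hsd⟩ := TopologicalSpace.exists_countable_dense X
  haveI := hsc.to_subtype
  set φ : Y → (s → EReal) := fun y d => f (d.1, y) with hφdef
  have hφ : Continuous φ := continuous_pi fun d => hf1 d.1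
  have hrange : (Set.range φ).Countable := scattered_range_countable hY φ hφ
  obtain ⟨e, he⟩ := hrange.exists_eq_range (Set.range_nonempty φ)
  have hsel : ∀ n, ∃ y : Y, φ y = e n := by
    intro n
    have : e n ∈ Set.range φ := by rw [he]; exact ⟨n, rfl⟩
    exact this
  choose v hv using hsel
  have key : ∀ y y' : Y, φ y = φ y' → ∀ x, f (x, y) = f (x, y') := by
    intro y y' h x
    have : (fun x => f (x, y)) = fun x => f (x, y') :=
      Continuous.ext_on hsd (hf2 y) (hf2 y') (fun z hz => congrFun h ⟨z, hz⟩)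
    exact congrFun this x
  refine ⟨fun n x => f (x, v n), fun n => hf2 (v n), fun x => ?_⟩
  obtain ⟨y₀, -, hy₀⟩ := IsCompact.exists_isMinOn (isCompact_univ (X := Y)) Set.univ_nonempty
    ((hf1 x).continuousOn)
  obtain ⟨y₁, -, hy₁⟩ := IsCompact.exists_isMaxOn (isCompact_univ (X := Y)) Set.univ_nonempty
    ((hf1 x).continuousOn)
  have hinf : (⨅ y : Y, f (x, y)) = f (x, y₀) :=
    le_antisymm (iInf_le _ y₀) (le_iInf fun y => hy₀ (Set.mem_univ y))
  have hsup : (⨆ y : Y, f (x, y)) = f (x, y₁) :=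
    le_antisymm (iSup_le fun y => hy₁ (Set.mem_univ y)) (le_iSup (fun y : Y => f (x, y)) y₁)
  have hfind : ∀ y : Y, ∃ n, f (x, v n) = f (x, y) := by
    intro y
    have : φ y ∈ Set.range e := he ▸ Set.mem_range_self y
    obtain ⟨n, hn⟩ := this
    exact ⟨n, key (v n) y (by rw [hv n, hn]) x⟩
  constructor
  · refine ⟨?_, ?_⟩
    · obtain ⟨n, hn⟩ := hfind y₀
      exact ⟨n, by show f (x, v n) = _; rw [hn]; exact hinf.symm⟩
    · rintro z ⟨n, rfl⟩
      exact iInf_le (fun y => f (x, y)) (v n)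
  · refine ⟨?_, ?_⟩
    · obtain ⟨n, hn⟩ := hfind y₁
      exact ⟨n, by show f (x, v n) = _; rw [hn]; exact hsup.symm⟩
    · rintro z ⟨n, rfl⟩
      exact le_iSup (fun y => f (x, y)) (v n)
end

section
/- Let X be an infinite regular topological space. Then there exists a sequence (G_n)_{n∈ℕ} of pairwise disjoint infinite open subsets of X. -/
open Set

theorem stmt13 {X : Type*} [TopologicalSpace X] [RegularSpace X] [T1Space X]
    [Infinite X] :
    ∃ G : ℕ → Set X, (∀ n, IsOpen (G n) ∧ (G n).Infinite) ∧
      ∀ n m, n ≠ m → Disjoint (G n) (G m) := by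
  classical
  set I : Set X := {x | IsOpen ({x} : Set X)} with hIdef
  by_cases hIinf : I.Infinite
  · -- infinitely many isolated points: split them into infinitely many infinite sets
    let f : ℕ ↪ I := hIinf.natEmbedding
    let g : ℕ → ℕ → X := fun n m => (f (Nat.pair n m) : X)
    have hg : ∀ n m n' m', g n m = g n' m' → n = n' ∧ m = m' := by
      intro n m n' m' h
      have := f.injective (Subtype.ext h)
      have h2 := Nat.pair_eq_pair.mp this
      exact h2
    refine ⟨fun n => Set.range (g n), fun n => ?_, ?_⟩
    · constructor
      · have h : Set.range (g n) = ⋃ m, {g n m} := by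
          ext x; simp [eq_comm]
        show IsOpen (Set.range (g n))
        rw [h]
        exact isOpen_iUnion fun m => (f (Nat.pair n m)).2
      · exact Set.infinite_range_of_injective fun a b h => (hg n a n b h).2
    · intro n m hnm
      rw [Set.disjoint_left]
      rintro x ⟨a, rfl⟩ ⟨b, hb⟩
      exact hnm ((hg m b n a hb).1.symm)
  · -- finitely many isolated points
    have hIfin : I.Finite := Set.not_infinite.mp hIinf
    have hWopen : IsOpen Iᶜ := hIfin.isClosed.isOpen_compl
    have hWinf : Iᶜ.Infinite := hIfin.infinite_compl
    have key : ∀ V : Set X, IsOpen V → V ⊆ Iᶜ → V.Nonempty → V.Infinite := by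
      intro V hVo hVs hVne
      by_contra hinf
      rw [Set.not_infinite] at hinf
      have hfin := hinf
      obtain ⟨x, hx⟩ := hVne
      have hxo : IsOpen ({x} : Set X) := by
        have heq : ({x} : Set X) = V ∩ (V \ {x})ᶜ := by
          ext y
          simp only [Set.mem_singleton_iff, Set.mem_inter_iff, Set.mem_compl_iff,
            Set.mem_diff, not_and, not_not]
          constructor
          · rintro rfl; exact ⟨hx, fun _ => rfl⟩
          · rintro ⟨hyV, h⟩; exact h hyV
        rw [heq]
        exact hVo.inter (hfin.diff : (V \ {x}).Finite).isClosed.isOpen_compl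
      exact hVs hx hxo
    -- every nonempty open set inside Iᶜ can be split into two disjoint such sets
    have split : ∀ V : {V : Set X // IsOpen V ∧ V ⊆ Iᶜ ∧ V.Nonempty},
        ∃ A B : {V : Set X // IsOpen V ∧ V ⊆ Iᶜ ∧ V.Nonempty},
          (A : Set X) ⊆ V ∧ (B : Set X) ⊆ V ∧ Disjoint (A : Set X) (B : Set X) := by
      rintro ⟨V, hVo, hVs, hVne⟩
      have hVinf := key V hVo hVs hVne
      obtain ⟨x, hx, y, hy, hxy⟩ := hVinf.nontrivial
      obtain ⟨u, v, hu, hv, hxu, hyv, huv⟩ := t2_separation hxy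
      refine ⟨⟨u ∩ V, hu.inter hVo, fun z hz => hVs hz.2, ⟨x, hxu, hx⟩⟩,
        ⟨v ∩ V, hv.inter hVo, fun z hz => hVs hz.2, ⟨y, hyv, hy⟩⟩,
        Set.inter_subset_right, Set.inter_subset_right,
        huv.mono Set.inter_subset_left Set.inter_subset_left⟩
    choose A B hA hB hd using split
    let W : ℕ → {V : Set X // IsOpen V ∧ V ⊆ Iᶜ ∧ V.Nonempty} :=
      fun n => Nat.rec ⟨Iᶜ, hWopen, subset_rfl, hWinf.nonempty⟩ (fun _ prev => B prev) n
    have hWsucc : ∀ n, (W (n + 1)).1 ⊆ (W n).1 := by intro n; exact hB (W n)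
    have hWmono : ∀ n m, n ≤ m → (W m).1 ⊆ (W n).1 := by
      intro n m h
      induction h with
      | refl => exact subset_rfl
      | step h ih => exact (hWsucc _).trans ih
    refine ⟨fun n => (A (W n)).1, fun n => ?_, ?_⟩
    · exact ⟨(A (W n)).2.1, key _ (A (W n)).2.1 (A (W n)).2.2.1 (A (W n)).2.2.2⟩
    · have main : ∀ n m, n < m → Disjoint (A (W n)).1 (A (W m)).1 := by
        intro n m h
        have h1 : (A (W m)).1 ⊆ (W m).1 := hA (W m)
        have h2 : (W m).1 ⊆ (W (n + 1)).1 := hWmono _ _ h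
        exact (hd (W n)).mono_right (h1.trans h2)
      intro n m hnm
      rcases lt_or_gt_of_ne hnm with h | h
      · exact main n m h
      · exact (main m n h).symm
end

section
/- Let X be a completely regular topological space and G an infinite open subset of X. Then there exist a sequence (x_n)_{n∈ℕ} of points of G and a continuous function f : X → [-1,1] such that supp f ⊆ G, f(x_{2k-1}) = 1/k and f(x_{2k}) = -1/k for every k ∈ ℕ. -/
open Set Function

lemma mysep {X : Type*} [TopologicalSpace X] [CompletelyRegularSpace X]
    (a : X) (K : Set X) (hK : IsClosed K) (ha : a ∉ K) :
    ∃ g : X → ℝ, Continuous g ∧ g a = 1 ∧ (∀ x, g x ∈ Set.Icc (0:ℝ) 1) ∧ ∀ x ∈ K, g x = 0 := by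
  obtain ⟨f, cf, hf0, hf1⟩ := CompletelyRegularSpace.completely_regular a K hK ha
  refine ⟨fun x => 1 - (f x : ℝ), by continuity, by simp [hf0], ?_, ?_⟩
  · intro x
    have h1 := (f x).2.1
    have h2 := (f x).2.2
    exact ⟨by simpa using h2, by simpa using h1⟩
  · intro x hx
    have : f x = 1 := hf1 hx
    simp [this]

lemma mystep {X : Type*} [TopologicalSpace X] [CompletelyRegularSpace X] [T1Space X]
    (V : Set X) (hVo : IsOpen V) (hVi : V.Infinite) :
    ∃ (y : X) (g : X → ℝ) (V' : Set X), y ∈ V ∧ Continuous g ∧ g y = 1 ∧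
      (∀ x, g x ∈ Set.Icc (0:ℝ) 1) ∧ Function.support g ⊆ V ∧
      IsOpen V' ∧ V' ⊆ V ∧ V'.Infinite ∧ ∀ x ∈ V', g x = 0 := by
  -- pick two distinct points of V
  obtain ⟨a, ha, b, hb, hab⟩ : ∃ a ∈ V, ∃ b ∈ V, a ≠ b := by
    obtain ⟨a, ha⟩ := hVi.nonempty
    obtain ⟨b, hb, hba⟩ := (hVi.diff (Set.finite_singleton a)).nonempty
    exact ⟨a, ha, b, hb, fun h => by simp [h] at hba⟩
  -- h : 0 at a, 1 outside V and at b
  obtain ⟨h, hc, ha1, hIcc, hzero⟩ := mysep a (Vᶜ ∪ {b}) (hVo.isClosed_compl.union isClosed_singleton)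
    (by simp [ha, hab])
  -- flip so h a = 0, h = 1 on Vᶜ ∪ {b}
  set h' : X → ℝ := fun x => 1 - h x with hh'
  have hc' : Continuous h' := by continuity
  have h'a : h' a = 0 := by simp [hh', ha1]
  have h'b : h' b = 1 := by simp [hh', hzero b (by simp)]
  have h'out : ∀ x ∉ V, h' x = 1 := fun x hx => by simp [hh', hzero x (Or.inl hx)]
  -- case split
  by_cases hA : (V ∩ {x | h' x < 1/2}).Infinite
  · -- V' = V ∩ {h' < 1/2}, y = b
    have hbK : b ∉ Vᶜ ∪ {x | h' x ≤ 1/2} := by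
      simp only [Set.mem_union, Set.mem_compl_iff, Set.mem_setOf_eq, h'b]
      push_neg
      exact ⟨hb, by norm_num⟩
    obtain ⟨g, gc, gb, gIcc, gzero⟩ := mysep b (Vᶜ ∪ {x | h' x ≤ 1/2})
      ((hVo.isClosed_compl).union (isClosed_le hc' continuous_const)) hbK
    refine ⟨b, g, V ∩ {x | h' x < 1/2}, hb, gc, gb, gIcc, ?_, ?_, Set.inter_subset_left, hA, ?_⟩
    · intro x hx
      by_contra hxV
      exact hx (gzero x (Or.inl hxV))
    · exact hVo.inter (isOpen_lt hc' continuous_const)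
    · intro x hx
      exact gzero x (Or.inr (show h' x ≤ 1/2 from le_of_lt hx.2))
  · -- V' = V ∩ {h' > 1/3}, y = a
    have hB : (V ∩ {x | 1/3 < h' x}).Infinite := by
      have : V ⊆ (V ∩ {x | h' x < 1/2}) ∪ (V ∩ {x | 1/3 < h' x}) := by
        intro x hx
        rcases lt_or_ge (h' x) (1/2) with h1 | h1
        · exact Or.inl ⟨hx, h1⟩
        · exact Or.inr ⟨hx, show (1:ℝ)/3 < h' x by linarith⟩
      rcases Set.infinite_union.1 (hVi.mono this) with h1 | h1
      · exact absurd h1 hA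
      · exact h1
    have haK : a ∉ Vᶜ ∪ {x | 1/3 ≤ h' x} := by
      simp only [Set.mem_union, Set.mem_compl_iff, Set.mem_setOf_eq, h'a]
      push_neg
      exact ⟨ha, by norm_num⟩
    obtain ⟨g, gc, gb, gIcc, gzero⟩ := mysep a (Vᶜ ∪ {x | 1/3 ≤ h' x})
      ((hVo.isClosed_compl).union (isClosed_le continuous_const hc')) haK
    refine ⟨a, g, V ∩ {x | 1/3 < h' x}, ha, gc, gb, gIcc, ?_, ?_, Set.inter_subset_left, hB, ?_⟩
    · intro x hx
      by_contra hxV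
      exact hx (gzero x (Or.inl hxV))
    · exact hVo.inter (isOpen_lt continuous_const hc')
    · intro x hx
      exact gzero x (Or.inr (show (1:ℝ)/3 ≤ h' x from le_of_lt hx.2))

theorem stmt15 {X : Type*} [TopologicalSpace X] [CompletelyRegularSpace X] [T1Space X]
    (G : Set X) (hGo : IsOpen G) (hGi : G.Infinite) :
    ∃ (x : ℕ → X) (f : X → ℝ), (∀ n, x n ∈ G) ∧ Continuous f ∧
      (∀ a, f a ∈ Set.Icc (-1 : ℝ) 1) ∧ Function.support f ⊆ G ∧
      ∀ k : ℕ, f (x (2 * (k + 1) - 1)) = 1 / (k + 1) ∧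
        f (x (2 * (k + 1))) = -(1 / (k + 1)) := by
  classical
  have key : ∀ V : {S : Set X // IsOpen S ∧ S.Infinite},
      ∃ (y : X) (g : X → ℝ) (V' : {S : Set X // IsOpen S ∧ S.Infinite}),
        y ∈ V.1 ∧ Continuous g ∧ g y = 1 ∧ (∀ x, g x ∈ Set.Icc (0:ℝ) 1) ∧
        Function.support g ⊆ V.1 ∧ V'.1 ⊆ V.1 ∧ ∀ x ∈ V'.1, g x = 0 := by
    rintro ⟨V, hVo, hVi⟩
    obtain ⟨y, g, V', hy, gc, gy, gIcc, gsupp, hV'o, hV'sub, hV'i, hV'z⟩ := mystep V hVo hVi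
    exact ⟨y, g, ⟨V', hV'o, hV'i⟩, hy, gc, gy, gIcc, gsupp, hV'sub, hV'z⟩
  choose yy gg nxt hy hgc hg1 hgIcc hgsupp hsub hzero using key
  set seq : ℕ → {S : Set X // IsOpen S ∧ S.Infinite} :=
    fun n => Nat.rec ⟨G, hGo, hGi⟩ (fun _ S => nxt S) n with hseq
  have seq_succ : ∀ n, seq (n+1) = nxt (seq n) := fun n => rfl
  have mono : ∀ m n, m ≤ n → (seq n).1 ⊆ (seq m).1 := by
    intro m n h
    induction n with
    | zero => simp_all
    | succ n ih =>
      rcases Nat.lt_or_ge m (n+1) with h1 | h1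
      · exact (hsub (seq n)).trans (ih (Nat.lt_succ_iff.mp h1))
      · have : m = n + 1 := le_antisymm h h1
        subst this; exact subset_rfl
  have seqG : ∀ n, (seq n).1 ⊆ G := fun n => mono 0 n (Nat.zero_le _)
  set Y : ℕ → X := fun n => yy (seq n) with hY
  set gk : ℕ → X → ℝ := fun n => gg (seq n) with hgk
  have disj : ∀ i j, i < j → ∀ x, gk j x ≠ 0 → gk i x = 0 := by
    intro i j hij x hx
    have hxV : x ∈ (seq j).1 := hgsupp (seq j) hx
    have h2 : x ∈ (seq (i+1)).1 := mono (i+1) j hij hxV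
    rw [seq_succ] at h2
    exact hzero (seq i) x h2
  have disj' : ∀ i j, i ≠ j → ∀ x, gk i x ≠ 0 → gk j x = 0 := by
    intro i j hne x hx
    rcases lt_or_gt_of_ne hne with h | h
    · by_contra hj; exact hx (disj i j h x hj)
    · exact disj j i h x hx
  have gkY1 : ∀ m, gk m (Y m) = 1 := fun m => hg1 (seq m)
  have gkY0 : ∀ j m, j ≠ m → gk j (Y m) = 0 := by
    intro j m hne
    exact disj' m j (Ne.symm hne) (Y m) (by rw [gkY1 m]; norm_num)
  -- coefficients
  set c : ℕ → ℝ := fun m => if m % 2 = 1 then 1 / (((m+1)/2 : ℕ) : ℝ)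
    else -(1 / ((m/2 : ℕ) : ℝ)) with hc
  have cabs : ∀ m, |c m| ≤ 1 := by
    intro m
    by_cases hp : m % 2 = 1
    · rw [hc]; simp only [if_pos hp]
      rw [abs_of_nonneg (by positivity)]
      rcases Nat.eq_zero_or_pos ((m+1)/2) with h | h
      · simp [h]
      · rw [div_le_one (by exact_mod_cast h)]
        exact_mod_cast h
    · rw [hc]; simp only [if_neg hp]
      rw [abs_neg, abs_of_nonneg (by positivity)]
      rcases Nat.eq_zero_or_pos (m/2) with h | h
      · simp [h]
      · rw [div_le_one (by exact_mod_cast h)]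
        exact_mod_cast h
  have cabs2 : ∀ m, 1 ≤ m → |c m| ≤ 2 / m := by
    intro m hm
    have hm0 : (0:ℝ) < m := by exact_mod_cast hm
    by_cases hp : m % 2 = 1
    · rw [hc]; simp only [if_pos hp]
      rw [abs_of_nonneg (by positivity)]
      have h2' : (m:ℝ) ≤ 2 * (((m+1)/2 : ℕ) : ℝ) := by exact_mod_cast (by omega : m ≤ 2 * ((m+1)/2))
      have hq : (0:ℝ) < (((m+1)/2 : ℕ) : ℝ) := by exact_mod_cast (by omega : 1 ≤ (m+1)/2)
      rw [div_le_div_iff₀ hq hm0]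
      linarith
    · rw [hc]; simp only [if_neg hp]
      rw [abs_neg, abs_of_nonneg (by positivity)]
      have h2' : (m:ℝ) ≤ 2 * ((m/2 : ℕ) : ℝ) := by exact_mod_cast (by omega : m ≤ 2 * (m/2))
      have hq : (0:ℝ) < ((m/2 : ℕ) : ℝ) := by exact_mod_cast (by omega : 1 ≤ m/2)
      rw [div_le_div_iff₀ hq hm0]
      linarith
  set f : X → ℝ := fun x => ∑' n, c n * gk n x with hf
  have fcase : ∀ x, ((∀ m, gk m x = 0) ∧ f x = 0) ∨ ∃ i, gk i x ≠ 0 ∧ f x = c i * gk i x := by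
    intro x
    by_cases hx : ∀ m, gk m x = 0
    · left
      refine ⟨hx, ?_⟩
      rw [hf]
      have : (fun n => c n * gk n x) = fun _ => (0:ℝ) := funext fun n => by simp [hx n]
      simp only [this, tsum_zero]
    · right
      push_neg at hx
      obtain ⟨i, hi⟩ := hx
      refine ⟨i, hi, ?_⟩
      rw [hf]
      exact tsum_eq_single i (fun b hb => by simp [disj' i b (Ne.symm hb) x hi])
  have fY : ∀ m, f (Y m) = c m := by
    intro m
    have h2 : (∑' n, c n * gk n (Y m)) = c m * gk m (Y m) :=
      tsum_eq_single m (fun b hb => by simp [gkY0 b m hb])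
    show (∑' n, c n * gk n (Y m)) = c m
    rw [h2, gkY1 m]; ring
  set F : ℕ → X → ℝ := fun N x => ∑ m ∈ Finset.range N, c m * gk m x with hF
  have Fcont : ∀ N, Continuous (F N) :=
    fun N => continuous_finset_sum _ (fun m _ => continuous_const.mul (hgc (seq m)))
  have bound : ∀ N, 1 ≤ N → ∀ x, |f x - F N x| ≤ 2 / N := by
    intro N hN x
    have hN0 : (0:ℝ) < N := by exact_mod_cast hN
    rcases fcase x with ⟨hz, h⟩ | ⟨i, hi, h⟩
    · have hFz : F N x = 0 := by
        rw [hF]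
        exact Finset.sum_eq_zero fun m _ => by simp [hz m]
      rw [h, hFz]
      simpa using le_of_lt (by positivity : (0:ℝ) < 2/N)
    · rcases Nat.lt_or_ge i N with hiN | hiN
      · have hFe : F N x = c i * gk i x := by
          rw [hF]
          exact Finset.sum_eq_single_of_mem i (Finset.mem_range.2 hiN)
            (fun b _ hb => by simp [disj' i b (Ne.symm hb) x hi])
        rw [h, hFe]
        simpa using le_of_lt (by positivity : (0:ℝ) < 2/N)
      · have hFz : F N x = 0 := by
          rw [hF]
          refine Finset.sum_eq_zero fun m hm => ?_
          have : m ≠ i := by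
            have := Finset.mem_range.1 hm; omega
          simp [disj' i m (Ne.symm this) x hi]
        rw [h, hFz, sub_zero, abs_mul]
        have hg1' : |gk i x| ≤ 1 := by
          have := hgIcc (seq i) x
          rw [abs_of_nonneg this.1]
          exact this.2
        have hci : |c i| ≤ 2 / i := cabs2 i (le_trans hN hiN)
        have h2i : (2:ℝ) / i ≤ 2 / N := by
          apply div_le_div_of_nonneg_left (by norm_num) hN0
          exact_mod_cast hiN
        calc |c i| * |gk i x| ≤ |c i| * 1 := by
              exact mul_le_mul_of_nonneg_left hg1' (abs_nonneg _)
          _ = |c i| := mul_one _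
          _ ≤ 2 / N := le_trans hci h2i
  have tu : TendstoUniformly F f Filter.atTop := by
    rw [Metric.tendstoUniformly_iff]
    intro ε hε
    obtain ⟨N0, hN0⟩ := exists_nat_gt (2/ε)
    filter_upwards [Filter.eventually_ge_atTop (max N0 1)] with N hN x
    have h1 : 1 ≤ N := le_trans (le_max_right _ _) hN
    have hNN0 : N0 ≤ N := le_trans (le_max_left _ _) hN
    have hN0' : (2:ℝ)/ε < N := lt_of_lt_of_le hN0 (by exact_mod_cast hNN0)
    have hNpos : (0:ℝ) < N := by exact_mod_cast h1
    have h2N : 2 / (N:ℝ) < ε := by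
      rw [div_lt_iff₀ hNpos]
      rw [div_lt_iff₀ hε] at hN0'
      linarith
    have hb := bound N h1 x
    show dist (f x) (F N x) < ε
    calc dist (f x) (F N x) = |f x - F N x| := Real.dist_eq _ _
      _ ≤ 2 / N := hb
      _ < ε := h2N
  have fcont : Continuous f := tu.continuous (Filter.Eventually.of_forall Fcont).frequently
  refine ⟨Y, f, ?_, fcont, ?_, ?_, ?_⟩
  · intro n
    exact seqG n (hy (seq n))
  · intro a
    rcases fcase a with ⟨_, h⟩ | ⟨i, hi, h⟩
    · rw [h]; constructor <;> norm_num
    · rw [h]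
      have h1 : |c i * gk i a| ≤ 1 := by
        rw [abs_mul]
        have hg1' : |gk i a| ≤ 1 := by
          have := hgIcc (seq i) a
          rw [abs_of_nonneg this.1]
          exact this.2
        calc |c i| * |gk i a| ≤ 1 * 1 := mul_le_mul (cabs i) hg1' (abs_nonneg _) zero_le_one
          _ = 1 := one_mul _
      rw [abs_le] at h1
      exact ⟨h1.1, h1.2⟩
  · intro x hx
    rcases fcase x with ⟨_, h⟩ | ⟨i, hi, _⟩
    · exact absurd h hx
    · exact seqG i (hgsupp (seq i) hi)
  · intro k
    have h1 : 2 * (k + 1) - 1 = 2 * k + 1 := by omega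
    have codd : c (2 * k + 1) = 1 / ((k:ℝ) + 1) := by
      rw [hc]
      have : (2 * k + 1) % 2 = 1 := by omega
      simp only [if_pos this]
      have : (2 * k + 1 + 1) / 2 = k + 1 := by omega
      rw [this]
      push_cast
      ring
    have ceven : c (2 * (k + 1)) = -(1 / ((k:ℝ) + 1)) := by
      rw [hc]
      have hne : ¬ (2 * (k + 1)) % 2 = 1 := by omega
      simp only [if_neg hne]
      have : (2 * (k + 1)) / 2 = k + 1 := by omega
      rw [this]
      push_cast
      ring
    rw [h1]
    exact ⟨(fY _).trans codd, (fY _).trans ceven⟩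
end
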